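/- arXiv:1511.00209 — 5 statements merged into one kernel-verified Lean document; each statement's English description precedes it below -/
import Mathlib

section
/- Let A and B be finite alphabets and let x ∈ A^ℤ and y ∈ B^ℤ be eventually periodic sequences. Then the subshift generated by x and the subshift generated by y are flow equivalent. -/
open Classical

/-- The shift map `σ` on bi-infinite sequences: `σ(x)_i = x_{i+1}`. -/
def shiftMap {A : Type*} (x : ℤ → A) : ℤ → A := fun i => x (i + 1)

/-- The iterated shift `σ^k` for `k ∈ ℤ`: `σ^k(x)_i = x_{i+k}`. -/
def shiftZ {A : Type*} (k : ℤ) (x : ℤ → A) : ℤ → A := fun i => x (i + k)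

/-- `x` is periodic with period `N > 0`, i.e. `σ^N(x) = x`. -/
def IsPeriodicWith {A : Type*} (x : ℤ → A) (N : ℕ) : Prop :=
  0 < N ∧ ∀ i : ℤ, x (i + N) = x i

/-- `x` is periodic (with some period `N > 0`). -/
def IsPeriodicSeq {A : Type*} (x : ℤ → A) : Prop := ∃ N : ℕ, IsPeriodicWith x N

/-- The sequence `p(x;i,n)` obtained from `x` by removing the block `x_{i+1} ⋯ x_{i+n}`. -/
def removeBlock {A : Type*} (x : ℤ → A) (i : ℤ) (n : ℕ) : ℤ → A :=
  fun k => if k ≤ i then x k else x (k + n)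

/-- `(i,n)` is an anomaly occurrence of `x`: `n > 0` and `p(x;i,n)` is periodic. -/
def IsAnomalyOcc {A : Type*} (x : ℤ → A) (i : ℤ) (n : ℕ) : Prop :=
  0 < n ∧ IsPeriodicSeq (removeBlock x i n)

/-- `x` is eventually periodic: non-periodic, but removing some block leaves a periodic sequence. -/
def EventuallyPeriodic {A : Type*} (x : ℤ → A) : Prop :=
  ¬ IsPeriodicSeq x ∧ ∃ (i : ℤ) (n : ℕ), IsAnomalyOcc x i n

/-- The least period of an eventually periodic sequence `x`: the least period of
`p(x;i,n)` over anomaly occurrences `(i,n)` of `x`. -/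
noncomputable def evLeastPeriod {A : Type*} (x : ℤ → A) : ℕ :=
  sInf {N : ℕ | ∃ (i : ℤ) (n : ℕ), IsAnomalyOcc x i n ∧ IsPeriodicWith (removeBlock x i n) N}

/-- The anomaly size `a(x)`: the minimum of `n` over anomaly occurrences `(i,n)` of `x`. -/
noncomputable def anomalySize {A : Type*} (x : ℤ → A) : ℕ :=
  sInf {n : ℕ | ∃ i : ℤ, IsAnomalyOcc x i n}

/-- The orbit `{σ^k(x) : k ∈ ℤ}` of a bi-infinite sequence. -/
def seqOrbit {A : Type*} (x : ℤ → A) : Set (ℤ → A) := {y | ∃ k : ℤ, y = shiftZ k x}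

/-- The subshift generated by `x`: the closure of its orbit in the product topology. -/
def subshiftGen {A : Type*} [TopologicalSpace A] (x : ℤ → A) : Set (ℤ → A) :=
  closure (seqOrbit x)

/-- Two subshifts are conjugate if there is a homeomorphism between them commuting
with the shift. -/
def Conjugate {A B : Type*} [TopologicalSpace A] [TopologicalSpace B]
    (X : Set (ℤ → A)) (Y : Set (ℤ → B)) : Prop :=
  ∃ φ : X ≃ₜ Y, ∀ (u : ℤ → A) (hu : u ∈ X) (hu' : shiftMap u ∈ X),
    ((φ ⟨shiftMap u, hu'⟩ : Y) : ℤ → B) = shiftMap ((φ ⟨u, hu⟩ : Y) : ℤ → B)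

/-- The relation generating the suspension: `(x,s) ∼ (σ^n(x), s - n)`. -/
def SuspRel {A : Type*} (X : Set (ℤ → A)) : (X × ℝ) → (X × ℝ) → Prop :=
  fun p q => ∃ n : ℤ, (q.1 : ℤ → A) = shiftZ n (p.1 : ℤ → A) ∧ q.2 = p.2 - n

/-- The suspension `ΣX` of a subshift `X`. -/
def Susp {A : Type*} [TopologicalSpace A] (X : Set (ℤ → A)) : Type _ :=
  Quot (SuspRel X)

instance {A : Type*} [TopologicalSpace A] (X : Set (ℤ → A)) : TopologicalSpace (Susp X) :=
  instTopologicalSpaceQuot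

/-- The suspension flow `φ_t [x,s] = [x, s+t]`. -/
def suspFlow {A : Type*} [TopologicalSpace A] (X : Set (ℤ → A)) (t : ℝ) :
    Susp X → Susp X :=
  Quot.lift (fun p => Quot.mk _ (p.1, p.2 + t)) (by
    rintro p r ⟨n, h1, h2⟩
    exact Quot.sound ⟨n, h1, by rw [h2]; ring⟩)

/-- Two subshifts are flow equivalent if there is a homeomorphism of their suspensions
taking flow lines to flow lines in an orientation-preserving way. -/
def FlowEquiv {A B : Type*} [TopologicalSpace A] [TopologicalSpace B]
    (X : Set (ℤ → A)) (Y : Set (ℤ → B)) : Prop :=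
  ∃ h : Susp X ≃ₜ Susp Y, ∀ u : Susp X, ∃ τ : ℝ → ℝ,
    StrictMono τ ∧ Function.Bijective τ ∧ τ 0 = 0 ∧
      ∀ t : ℝ, h (suspFlow X t u) = suspFlow Y (τ t) (h u)

/-- Cell lengths `z_n` for the type-`S` skew Sturmian sequence `S(0, q/p)`, with `β = p/q`. -/
noncomputable def cellLenS (p q : ℤ) (n : ℤ) : ℕ :=
  if n < 0 then
    ({k : ℤ | (n : ℚ) < (k : ℚ) * ((p : ℚ) / (q : ℚ)) ∧
        (k : ℚ) * ((p : ℚ) / (q : ℚ)) ≤ (n : ℚ) + 1}).ncard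
  else if n = 0 then
    ({k : ℤ | 0 < (k : ℚ) * ((p : ℚ) / (q : ℚ)) ∧
        (k : ℚ) * ((p : ℚ) / (q : ℚ)) < 1}).ncard
  else
    ({k : ℤ | (n : ℚ) ≤ (k : ℚ) * ((p : ℚ) / (q : ℚ)) ∧
        (k : ℚ) * ((p : ℚ) / (q : ℚ)) < (n : ℚ) + 1}).ncard

/-- Cell lengths `z′_n` for the type-`S′` skew Sturmian sequence `S′(0, q/p)`, with `β = p/q`. -/
noncomputable def cellLenS' (p q : ℤ) (n : ℤ) : ℕ :=
  if n < 0 then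
    ({k : ℤ | (n : ℚ) ≤ (k : ℚ) * ((p : ℚ) / (q : ℚ)) ∧
        (k : ℚ) * ((p : ℚ) / (q : ℚ)) < (n : ℚ) + 1}).ncard
  else if n = 0 then
    ({k : ℤ | 0 ≤ (k : ℚ) * ((p : ℚ) / (q : ℚ)) ∧
        (k : ℚ) * ((p : ℚ) / (q : ℚ)) ≤ 1}).ncard
  else
    ({k : ℤ | (n : ℚ) < (k : ℚ) * ((p : ℚ) / (q : ℚ)) ∧
        (k : ℚ) * ((p : ℚ) / (q : ℚ)) ≤ (n : ℚ) + 1}).ncard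

/-- The position `L_n` of the leading `1` of the cell `B_n`. -/
noncomputable def cellStart (z : ℤ → ℕ) (n : ℤ) : ℤ :=
  if 0 ≤ n then n + ∑ j ∈ Finset.Ico (0 : ℤ) n, (z j : ℤ)
  else n - ∑ j ∈ Finset.Ico n (0 : ℤ), (z j : ℤ)

/-- The `{0,1}`-sequence determined by cell lengths `z`: a `1` at each position `L_n`
and `0` elsewhere. -/
noncomputable def seqOfCells (z : ℤ → ℕ) : ℤ → Fin 2 :=
  fun i => if ∃ n : ℤ, i = cellStart z n then 1 else 0

/-- The type-`S` skew Sturmian sequence `S(0, q/p)`. -/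
noncomputable def sturmS (p q : ℤ) : ℤ → Fin 2 := seqOfCells (cellLenS p q)

/-- The type-`S′` skew Sturmian sequence `S′(0, q/p)`. -/
noncomputable def sturmS' (p q : ℤ) : ℤ → Fin 2 := seqOfCells (cellLenS' p q)

/-! ### Auxiliary machinery -/

section ShiftBasics

variable {A : Type*}

lemma shiftZ_apply (k : ℤ) (x : ℤ → A) (i : ℤ) : shiftZ k x i = x (i + k) := rfl

lemma shiftZ_zero (x : ℤ → A) : shiftZ 0 x = x := funext fun i => by simp [shiftZ]

lemma shiftZ_shiftZ (a b : ℤ) (x : ℤ → A) :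
    shiftZ a (shiftZ b x) = shiftZ (a + b) x := by
  funext i; simp [shiftZ]; ring_nf

lemma self_mem_seqOrbit (x : ℤ → A) : x ∈ seqOrbit x :=
  ⟨0, (shiftZ_zero x).symm⟩

lemma shiftZ_mem_seqOrbit (k : ℤ) (x : ℤ → A) : shiftZ k x ∈ seqOrbit x := ⟨k, rfl⟩

variable [TopologicalSpace A]

lemma continuous_shiftZ (k : ℤ) : Continuous (shiftZ k : (ℤ → A) → (ℤ → A)) :=
  continuous_pi fun i => continuous_apply (i + k)

lemma self_mem_subshiftGen (x : ℤ → A) : x ∈ subshiftGen x :=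
  subset_closure (self_mem_seqOrbit x)

lemma shiftZ_mem_subshiftGen (k : ℤ) (x : ℤ → A) : shiftZ k x ∈ subshiftGen x :=
  subset_closure (shiftZ_mem_seqOrbit k x)

lemma shiftZ_mem_subshiftGen_of_mem {x u : ℤ → A} (hu : u ∈ subshiftGen x) (m : ℤ) :
    shiftZ m u ∈ subshiftGen x := by
  have h1 : shiftZ m u ∈ closure (shiftZ m '' seqOrbit x) := by
    have := (continuous_shiftZ (A := A) m).continuousOn (s := seqOrbit x)
    exact (image_closure_subset_closure_image (continuous_shiftZ m)) ⟨u, hu, rfl⟩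
  refine closure_mono ?_ h1
  rintro z ⟨z', ⟨k, rfl⟩, rfl⟩
  exact ⟨k + m, by rw [shiftZ_shiftZ, add_comm]⟩

end ShiftBasics

/-- Structured data witnessing eventual periodicity. -/
structure EPData (A : Type*) where
  x : ℤ → A
  w : ℤ → A
  i0 : ℤ
  n0 : ℕ
  P : ℕ
  hn : 0 < n0
  hP : 0 < P
  hper : ∀ a : ℤ, w (a + P) = w a
  hleast : ∀ d : ℤ, (∀ a, w (a + d) = w a) → (P : ℤ) ∣ d
  hleft : ∀ a : ℤ, a ≤ i0 → x a = w a
  hright : ∀ a : ℤ, i0 + n0 < a → x a = w (a - n0)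
  hnp : ¬ IsPeriodicSeq x

namespace EPData

variable {A : Type*} (d : EPData A)

lemma per_nat (q : ℕ) (a : ℤ) : d.w (a + (d.P * q : ℕ)) = d.w a := by
  induction q with
  | zero => simp
  | succ q ih =>
      have h1 := d.hper (a + (d.P * q : ℕ))
      rw [show a + ((d.P * (q+1) : ℕ) : ℤ) = a + (d.P * q : ℕ) + d.P by push_cast; ring]
      rw [h1, ih]

lemma per_int (m : ℤ) (hm : (d.P : ℤ) ∣ m) (a : ℤ) : d.w (a + m) = d.w a := by
  obtain ⟨q, rfl⟩ := hm
  rcases le_or_gt 0 q with hq | hq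
  · obtain ⟨q', rfl⟩ : ∃ q' : ℕ, q = (q' : ℤ) := ⟨q.toNat, by omega⟩
    have := d.per_nat q' a
    rw [show a + (d.P:ℤ) * q' = a + ((d.P * q' : ℕ) : ℤ) by push_cast; ring]
    exact this
  · obtain ⟨q', hq'⟩ : ∃ q' : ℕ, q = -(q' : ℤ) := ⟨(-q).toNat, by omega⟩
    subst hq'
    have := d.per_nat q' (a + (d.P:ℤ) * (-(q':ℤ)))
    rw [show a + (d.P:ℤ) * (-(q':ℤ)) + ((d.P * q' : ℕ) : ℤ) = a by push_cast; ring] at this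
    exact this.symm

/-- If `w` agrees with its `c`-shift on `P` consecutive positions, `P ∣ c`. -/
lemma dvd_of_block {c a₀ : ℤ}
    (h : ∀ t : ℤ, 0 ≤ t → t < d.P → d.w (a₀ + t + c) = d.w (a₀ + t)) :
    (d.P : ℤ) ∣ c := by
  apply d.hleast
  intro a
  have hP : (0:ℤ) < d.P := mod_cast d.hP
  set t := (a - a₀) % d.P with ht
  have h0 : 0 ≤ t := Int.emod_nonneg _ (by positivity)
  have h1 : t < d.P := Int.emod_lt_of_pos _ hP
  have hdvd : (d.P : ℤ) ∣ (a - a₀ - t) := Int.dvd_self_sub_of_emod_eq rfl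
  have ha : a = a₀ + t + (a - a₀ - t) := by ring
  calc d.w (a + c) = d.w (a₀ + t + c + (a - a₀ - t)) := by ring_nf
    _ = d.w (a₀ + t + c) := d.per_int _ hdvd _
    _ = d.w (a₀ + t) := h t h0 h1
    _ = d.w (a₀ + t + (a - a₀ - t)) := (d.per_int _ hdvd _).symm
    _ = d.w a := by ring_nf

lemma not_per (m : ℤ) (hm : m ≠ 0) : ∃ a, d.x (a + m) ≠ d.x a := by
  by_contra h
  push_neg at h
  apply d.hnp
  refine ⟨m.natAbs, Int.natAbs_pos.2 hm, fun i => ?_⟩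
  rcases lt_or_gt_of_ne hm with h' | h'
  · have : ((m.natAbs : ℤ)) = -m := by omega
    rw [this]
    have := h (i + -m)
    rw [show i + -m + m = i by ring] at this
    exact this.symm
  · have : ((m.natAbs : ℤ)) = m := by omega
    rw [this]; exact h i

lemma x_eq_shift_iff {k k' : ℤ} (h : ∀ c : ℤ, d.x (c + k') = d.x (c + k)) : k' = k := by
  by_contra hne
  obtain ⟨a, ha⟩ := d.not_per (k' - k) (sub_ne_zero.2 hne)
  apply ha
  have := h (a + k - k)
  have h2 := h (a - k)
  rw [show a - k + k' = a + (k' - k) by ring, show a - k + k = a by ring] at h2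
  exact h2

/-- A shift of `x` never equals a shift of `w` (even pointwise-everywhere). -/
lemma not_allmatch (k j : ℤ) : ¬ ∀ c : ℤ, d.x (c + k) = d.w (c + j) := by
  intro h
  apply d.hnp
  refine ⟨d.P, d.hP, fun i => ?_⟩
  have h1 := h (i + d.P - k)
  have h2 := h (i - k)
  rw [show i + d.P - k + k = i + d.P by ring] at h1
  rw [show i - k + k = i by ring] at h2
  rw [h1, h2, show i + (d.P:ℤ) - k + j = (i - k + j) + d.P by ring, d.hper]

end EPData
namespace EPData

variable {A : Type*} (d : EPData A)

lemma wc {u v : ℤ} (h : u = v) : d.w u = d.w v := by rw [h]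
lemma xc {u v : ℤ} (h : u = v) : d.x u = d.x v := by rw [h]

/-- Two shifts of `x` matching on a large window centered appropriately must coincide. -/
lemma eq_of_orbit_match (k k' : ℤ) {M : ℕ}
    (hM : |d.i0| + d.n0 + d.P + 1 + |k| ≤ (M : ℤ))
    (h : ∀ c : ℤ, |c| ≤ (M : ℤ) → d.x (c + k') = d.x (c + k)) : k' = k := by
  obtain ⟨I0, hI1, hI2, hI3⟩ : ∃ I0 : ℤ, d.i0 ≤ I0 ∧ -I0 ≤ d.i0 ∧ |d.i0| = I0 :=
    ⟨|d.i0|, le_abs_self _, neg_abs_le _, rfl⟩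
  obtain ⟨K0, hK1, hK2, hK3⟩ : ∃ K0 : ℤ, k ≤ K0 ∧ -K0 ≤ k ∧ |k| = K0 :=
    ⟨|k|, le_abs_self _, neg_abs_le _, rfl⟩
  rw [hI3, hK3] at hM
  have hP : (0:ℤ) < (d.P:ℤ) := mod_cast d.hP
  have hn : (0:ℤ) < (d.n0:ℤ) := mod_cast d.hn
  obtain ⟨dd, hdd⟩ : ∃ dd : ℤ, dd = k' - k := ⟨_, rfl⟩
  have Eq : ∀ a : ℤ, -(I0 + d.n0 + d.P + 1) ≤ a → a ≤ I0 + d.n0 + d.P + 1 →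
      d.x (a + dd) = d.x a := by
    intro a ha1 ha2
    have hc : |a - k| ≤ (M:ℤ) := by rw [abs_le]; omega
    have := h (a - k) hc
    rw [show a - k + k' = a + dd by omega, show a - k + k = a by ring] at this
    exact this
  rcases lt_trichotomy dd 0 with hd | hd | hd
  -- case dd < 0
  · exfalso
    obtain ⟨e, hepos, hde⟩ : ∃ e : ℤ, 0 < e ∧ dd = -e := ⟨-dd, by omega, by omega⟩
    have Eq' : ∀ a : ℤ, -(I0 + d.n0 + d.P + 1) ≤ a → a ≤ I0 + d.n0 + d.P + 1 →
        d.x (a - e) = d.x a := by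
      intro a ha1 ha2
      have := Eq a ha1 ha2
      rw [show a + dd = a - e by omega] at this
      exact this
    have hdvd : (d.P:ℤ) ∣ e := by
      rw [← dvd_neg]
      apply d.dvd_of_block (a₀ := d.i0 - d.P + 1)
      intro t ht1 ht2
      have hEq := Eq' (d.i0 - d.P + 1 + t) (by omega) (by omega)
      rw [d.hleft (d.i0 - d.P + 1 + t) (by omega)] at hEq
      rw [← hEq, d.hleft (d.i0 - d.P + 1 + t - e) (by omega)]
      exact d.wc (by ring)
    have heP : (d.P:ℤ) ≤ e := Int.le_of_dvd hepos hdvd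
    have C : ∀ b : ℤ, b ≤ d.i0 + d.n0 → d.x b = d.w b := by
      have key : ∀ t : ℕ, ∀ b : ℤ, b ≤ d.i0 + d.n0 → (b - d.i0).toNat = t →
          d.x b = d.w b := by
        intro t
        induction t using Nat.strong_induction_on with
        | _ t ih =>
          intro b hb htb
          by_cases hb2 : b ≤ d.i0
          · exact d.hleft b hb2
          · push_neg at hb2
            have hEq := (Eq' b (by omega) (by omega)).symm
            have hstep : d.x (b - e) = d.w (b - e) :=
              ih (b - e - d.i0).toNat (by omega) (b - e) (by omega) rfl
            rw [hEq, hstep]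
            rw [show b - e = b + -e by ring, d.per_int _ (dvd_neg.2 hdvd)]
      intro b hb; exact key _ b hb rfl
    have hdn : (d.P:ℤ) ∣ -(d.n0:ℤ) := by
      apply d.dvd_of_block (a₀ := d.i0 + d.n0 + 1)
      intro t ht1 ht2
      have hEq := Eq' (d.i0 + d.n0 + 1 + t) (by omega) (by omega)
      have h1 : d.x (d.i0 + d.n0 + 1 + t - e) = d.w (d.i0 + d.n0 + 1 + t) := by
        rw [C (d.i0 + d.n0 + 1 + t - e) (by omega)]
        rw [show d.i0 + (d.n0:ℤ) + 1 + t - e = d.i0 + d.n0 + 1 + t + -e by ring,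
          d.per_int _ (dvd_neg.2 hdvd)]
      have h2 : d.x (d.i0 + d.n0 + 1 + t) = d.w (d.i0 + d.n0 + 1 + t + -(d.n0:ℤ)) := by
        rw [d.hright _ (by omega)]
        exact d.wc (by ring)
      rw [h1, h2] at hEq
      exact hEq.symm
    apply d.hnp
    refine ⟨d.P, d.hP, fun i => ?_⟩
    have hxw : ∀ a : ℤ, d.x a = d.w a := by
      intro a
      by_cases haa : a ≤ d.i0 + d.n0
      · exact C a haa
      · rw [d.hright a (by omega), show a - (d.n0:ℤ) = a + -(d.n0:ℤ) by ring,
          d.per_int _ hdn]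
    rw [hxw, hxw, d.hper]
  · omega
  -- case dd > 0
  · exfalso
    have hdvd : (d.P:ℤ) ∣ dd := by
      apply d.dvd_of_block (a₀ := d.i0 + 1)
      intro t ht1 ht2
      have hEq := Eq (d.i0 + d.n0 + 1 + t) (by omega) (by omega)
      have e1 : d.x (d.i0 + d.n0 + 1 + t) = d.w (d.i0 + 1 + t) := by
        rw [d.hright _ (by omega)]; exact d.wc (by ring)
      have e2 : d.x (d.i0 + d.n0 + 1 + t + dd) = d.w (d.i0 + 1 + t + dd) := by
        rw [d.hright _ (by omega)]; exact d.wc (by ring)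
      rw [e1, e2] at hEq
      exact hEq
    have hddP : (d.P:ℤ) ≤ dd := Int.le_of_dvd hd hdvd
    have C : ∀ b : ℤ, d.i0 < b → d.x b = d.w (b - d.n0) := by
      have key : ∀ t : ℕ, ∀ b : ℤ, d.i0 < b → (d.i0 + d.n0 + 1 - b).toNat = t →
          d.x b = d.w (b - d.n0) := by
        intro t
        induction t using Nat.strong_induction_on with
        | _ t ih =>
          intro b hb htb
          by_cases hb2 : d.i0 + d.n0 < b
          · exact d.hright b hb2
          · push_neg at hb2
            have hEq := (Eq b (by omega) (by omega)).symm
            have hstep : d.x (b + dd) = d.w (b + dd - d.n0) :=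
              ih (d.i0 + d.n0 + 1 - (b + dd)).toNat (by omega) (b + dd) (by omega) rfl
            rw [hEq, hstep, show b + dd - (d.n0:ℤ) = (b - d.n0) + dd by ring,
              d.per_int dd hdvd]
      intro b hb; exact key _ b hb rfl
    have hdn : (d.P:ℤ) ∣ -(d.n0:ℤ) := by
      apply d.dvd_of_block (a₀ := d.i0 - d.P + 1)
      intro t ht1 ht2
      have h1 : d.x (d.i0 - d.P + 1 + t) = d.w (d.i0 - d.P + 1 + t) :=
        d.hleft _ (by omega)
      have h2 : d.x (d.i0 - d.P + 1 + t + dd) = d.w (d.i0 - d.P + 1 + t + -(d.n0:ℤ)) := by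
        rw [C _ (by omega)]
        rw [show d.i0 - (d.P:ℤ) + 1 + t + dd - d.n0
              = (d.i0 - d.P + 1 + t + -(d.n0:ℤ)) + dd by ring, d.per_int dd hdvd]
      have hEq := Eq (d.i0 - d.P + 1 + t) (by omega) (by omega)
      rw [h1, h2] at hEq
      exact hEq
    apply d.hnp
    refine ⟨d.P, d.hP, fun i => ?_⟩
    have hxw : ∀ a : ℤ, d.x a = d.w a := by
      intro a
      by_cases haa : a ≤ d.i0
      · exact d.hleft a haa
      · rw [C a (by omega), show a - (d.n0:ℤ) = a + -(d.n0:ℤ) by ring, d.per_int _ hdn]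
    rw [hxw, hxw, d.hper]

/-- A shift of `w` never matches a shift of `x` on a large window. -/
lemma not_w_match (k j : ℤ) {M : ℕ}
    (hM : |d.i0| + d.n0 + d.P + 1 + |k| ≤ (M : ℤ))
    (h : ∀ c : ℤ, |c| ≤ (M : ℤ) → d.w (c + j) = d.x (c + k)) : False := by
  obtain ⟨I0, hI1, hI2, hI3⟩ : ∃ I0 : ℤ, d.i0 ≤ I0 ∧ -I0 ≤ d.i0 ∧ |d.i0| = I0 :=
    ⟨|d.i0|, le_abs_self _, neg_abs_le _, rfl⟩
  obtain ⟨K0, hK1, hK2, hK3⟩ : ∃ K0 : ℤ, k ≤ K0 ∧ -K0 ≤ k ∧ |k| = K0 :=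
    ⟨|k|, le_abs_self _, neg_abs_le _, rfl⟩
  rw [hI3, hK3] at hM
  have hP : (0:ℤ) < (d.P:ℤ) := mod_cast d.hP
  have hn : (0:ℤ) < (d.n0:ℤ) := mod_cast d.hn
  obtain ⟨jk, hjk⟩ : ∃ jk : ℤ, jk = j - k := ⟨_, rfl⟩
  have Eq : ∀ a : ℤ, -(I0 + d.n0 + d.P + 1) ≤ a → a ≤ I0 + d.n0 + d.P + 1 →
      d.x a = d.w (a + jk) := by
    intro a ha1 ha2
    have hc : |a - k| ≤ (M:ℤ) := by rw [abs_le]; omega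
    have := h (a - k) hc
    rw [show a - k + j = a + jk by omega, show a - k + k = a by ring] at this
    exact this.symm
  have hdvd : (d.P:ℤ) ∣ jk := by
    apply d.dvd_of_block (a₀ := d.i0 - d.P + 1)
    intro t ht1 ht2
    have hEq := Eq (d.i0 - d.P + 1 + t) (by omega) (by omega)
    rw [d.hleft _ (by omega)] at hEq
    exact hEq.symm
  have hdn : (d.P:ℤ) ∣ (d.n0:ℤ) := by
    apply d.dvd_of_block (a₀ := d.i0 + 1)
    intro t ht1 ht2
    have hEq := Eq (d.i0 + d.n0 + 1 + t) (by omega) (by omega)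
    rw [d.hright _ (by omega), d.per_int _ hdvd] at hEq
    rw [show d.i0 + 1 + t + (d.n0:ℤ) = d.i0 + d.n0 + 1 + t by ring,
      show d.i0 + 1 + t = d.i0 + (d.n0:ℤ) + 1 + t - d.n0 by ring]
    exact hEq.symm
  apply d.hnp
  refine ⟨d.P, d.hP, fun i => ?_⟩
  have hxw : ∀ a : ℤ, d.x a = d.w a := by
    intro a
    by_cases haa : a ≤ d.i0
    · exact d.hleft a haa
    · by_cases hbb : d.i0 + d.n0 < a
      · rw [d.hright a hbb, show a - (d.n0:ℤ) = a + -(d.n0:ℤ) by ring,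
          d.per_int _ (dvd_neg.2 hdn)]
      · have hEq := Eq a (by omega) (by omega)
        rw [hEq, d.per_int _ hdvd]
  rw [hxw, hxw, d.hper]

/-- Left congruence: matching `σ^j w` on a window lying in the periodic past. -/
lemma cong_left (k j : ℤ) {M : ℕ} (hMP : (d.P : ℤ) ≤ (M:ℤ))
    (hk : k + (M:ℤ) ≤ d.i0)
    (h : ∀ c : ℤ, |c| ≤ (M : ℤ) → d.x (c + k) = d.w (c + j)) :
    (d.P : ℤ) ∣ (j - k) := by
  have hP : (0:ℤ) < (d.P:ℤ) := mod_cast d.hP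
  apply d.dvd_of_block (a₀ := k - M)
  intro t ht1 ht2
  have hc : |(-(M:ℤ) + t)| ≤ (M:ℤ) := by rw [abs_le]; omega
  have h0 := h (-(M:ℤ) + t) hc
  rw [xc d (show -(M:ℤ) + t + k = k - M + t by ring)] at h0
  rw [wc d (show -(M:ℤ) + t + j = (k - M + t) + (j - k) by ring)] at h0
  rw [← h0, d.hleft _ (by omega)]

/-- Right congruence: matching `σ^j w` on a window lying in the periodic future. -/
lemma cong_right (k j : ℤ) {M : ℕ} (hMP : (d.P : ℤ) ≤ (M:ℤ))
    (hk : d.i0 + d.n0 < k - (M:ℤ))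
    (h : ∀ c : ℤ, |c| ≤ (M : ℤ) → d.x (c + k) = d.w (c + j)) :
    (d.P : ℤ) ∣ (j + d.n0 - k) := by
  have hP : (0:ℤ) < (d.P:ℤ) := mod_cast d.hP
  apply d.dvd_of_block (a₀ := k - M - d.n0)
  intro t ht1 ht2
  have hc : |(-(M:ℤ) + t)| ≤ (M:ℤ) := by rw [abs_le]; omega
  have h0 := h (-(M:ℤ) + t) hc
  rw [xc d (show -(M:ℤ) + t + k = k - M + t by ring)] at h0
  rw [d.hright _ (by omega)] at h0
  rw [wc d (show k - (M:ℤ) + t - d.n0 = k - M - d.n0 + t by ring)] at h0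
  rw [wc d (show k - (M:ℤ) - d.n0 + t + (j + d.n0 - k) = -(M:ℤ) + t + j by ring)]
  exact h0.symm

end EPData
section Cylinders

variable {A : Type*} [TopologicalSpace A] [DiscreteTopology A]

lemma isOpen_cylinder (u : ℤ → A) (M : ℕ) :
    IsOpen {z : ℤ → A | ∀ c : ℤ, |c| ≤ (M:ℤ) → z c = u c} := by
  have : {z : ℤ → A | ∀ c : ℤ, |c| ≤ (M:ℤ) → z c = u c}
      = ⋂ c ∈ Finset.Icc (-(M:ℤ)) (M:ℤ), (fun z : ℤ → A => z c) ⁻¹' {u c} := by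
    ext z
    simp only [Set.mem_setOf_eq, Set.mem_iInter, Set.mem_preimage, Set.mem_singleton_iff,
      Finset.mem_Icc]
    constructor
    · intro h c hc; exact h c (by rw [abs_le]; omega)
    · intro h c hc; rw [abs_le] at hc; exact h c ⟨hc.1, hc.2⟩
  rw [this]
  exact isOpen_biInter_finset fun c _ => (continuous_apply c).isOpen_preimage _ (isOpen_discrete _)

/-- From membership in the subshift: matching on every finite window. -/
lemma match_of_mem_subshift {x u : ℤ → A} (hu : u ∈ subshiftGen x) (M : ℕ) :
    ∃ k : ℤ, ∀ c : ℤ, |c| ≤ (M:ℤ) → u c = x (c + k) := by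
  have h := mem_closure_iff.mp hu _ (isOpen_cylinder u M) (fun c _ => rfl)
  obtain ⟨z, hz1, k, rfl⟩ := h
  exact ⟨k, fun c hc => (hz1 c hc).symm⟩

/-- Basic neighbourhoods inside open subsets of `↥Y × ℝ`. -/
lemma basic_nbhd {Y : Set (ℤ → A)} {U : Set (↥Y × ℝ)} (hU : IsOpen U)
    {v₀ : ℤ → A} (hv₀ : v₀ ∈ Y) {c₀ : ℝ} (h : ((⟨v₀, hv₀⟩ : ↥Y), c₀) ∈ U) :
    ∃ (F : ℕ) (δ : ℝ), 0 < δ ∧ ∀ (u' : ℤ → A) (hu' : u' ∈ Y) (t : ℝ),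
      (∀ c : ℤ, |c| ≤ (F:ℤ) → u' c = v₀ c) → |t - c₀| < δ →
        ((⟨u', hu'⟩ : ↥Y), t) ∈ U := by
  obtain ⟨V₁, V₂, hV₁, hV₂, hm₁, hm₂, hsub⟩ :=
    isOpen_prod_iff.mp hU ⟨v₀, hv₀⟩ c₀ h
  obtain ⟨V₁', hV₁', hpre⟩ := isOpen_induced_iff.mp hV₁
  have hv₀' : v₀ ∈ V₁' := by rw [← hpre] at hm₁; exact hm₁
  obtain ⟨I, uf, hI, hIsub⟩ := isOpen_pi_iff.mp hV₁' v₀ hv₀'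
  obtain ⟨δ, hδ, hball⟩ := Metric.isOpen_iff.mp hV₂ c₀ hm₂
  refine ⟨I.sup (fun i => i.natAbs), δ, hδ, fun u' hu' t hmatch ht => ?_⟩
  apply hsub
  constructor
  · show (⟨u', hu'⟩ : ↥Y) ∈ V₁
    rw [← hpre]
    apply hIsub
    intro a ha
    have ha' : a ∈ I := ha
    have : u' a = v₀ a := by
      apply hmatch
      have h1 := Finset.le_sup (f := fun i : ℤ => i.natAbs) ha'
      rw [Int.abs_eq_natAbs]
      exact_mod_cast h1
    show u' a ∈ uf a
    rw [this]
    exact (hI a ha').2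
  · exact hball (by simpa [Real.dist_eq] using ht)

end Cylinders

namespace EPData

variable {A : Type*} [TopologicalSpace A] [DiscreteTopology A] (d : EPData A)

/-- Every shift of `w` belongs to the subshift generated by `x`. -/
lemma w_shift_mem (j : ℤ) : shiftZ j d.w ∈ subshiftGen d.x := by
  rw [subshiftGen, mem_closure_iff]
  intro o ho hmem
  obtain ⟨I, uf, hI, hIsub⟩ := isOpen_pi_iff.mp ho _ hmem
  obtain ⟨N, hN⟩ : ∃ N : ℕ, ∀ a ∈ I, a.natAbs ≤ N :=
    ⟨I.sup (fun i => i.natAbs), fun a ha => Finset.le_sup ha⟩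
  have hP : (0:ℤ) < (d.P:ℤ) := mod_cast d.hP
  obtain ⟨m, hm⟩ : ∃ m : ℕ, ∀ a : ℤ, a.natAbs ≤ N → a + j - d.P * m ≤ d.i0 := by
    refine ⟨(N + j.natAbs + d.i0.natAbs + 1), fun a ha => ?_⟩
    have h1 : ((N + j.natAbs + d.i0.natAbs + 1 : ℕ) : ℤ)
        ≤ (d.P:ℤ) * ((N + j.natAbs + d.i0.natAbs + 1 : ℕ) : ℤ) :=
      le_mul_of_one_le_left (by positivity) (by exact_mod_cast d.hP)
    omega
  refine ⟨shiftZ (j - d.P * m) d.x, hIsub ?_, shiftZ_mem_seqOrbit _ _⟩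
  intro a ha
  have h1 : shiftZ (j - d.P * m) d.x a = shiftZ j d.w a := by
    show d.x (a + (j - d.P * m)) = d.w (a + j)
    rw [d.hleft _ (by have := hm a (hN a ha); omega)]
    rw [show a + (j - (d.P:ℤ) * m) = (a + j) + (-(d.P * m)) by ring]
    exact d.per_int _ ⟨-m, by ring⟩ _
  rw [h1]
  exact (hI a ha).2

/-- Structure of the subshift: orbit of `x` together with orbit of `w`. -/
theorem mem_subshift_cases {u : ℤ → A} (hu : u ∈ subshiftGen d.x) :
    (∃ k, u = shiftZ k d.x) ∨ (∃ j, u = shiftZ j d.w) := by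
  by_cases hw : ∃ j, u = shiftZ j d.w
  · exact Or.inr hw
  left
  push_neg at hw
  -- a uniform window on which u differs from every shift of w
  have hj' : ∀ j₀ : ℕ, ∃ c : ℤ, j₀ < d.P → u c ≠ d.w (c + j₀) := by
    intro j₀
    by_cases hlt : j₀ < d.P
    · by_contra hcon
      push_neg at hcon
      exact hw j₀ (funext fun c => (hcon c).2)
    · exact ⟨0, fun h => absurd h hlt⟩
  choose cf hcf using hj'
  obtain ⟨M₀, hM₀⟩ : ∃ M₀ : ℕ, ∀ j₀ : ℕ, j₀ < d.P → (cf j₀).natAbs ≤ M₀ := by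
    refine ⟨(Finset.range d.P).sup (fun j₀ => (cf j₀).natAbs), fun j₀ hj₀ => ?_⟩
    exact Finset.le_sup (f := fun j₀ => (cf j₀).natAbs) (Finset.mem_range.mpr hj₀)
  have key : ∀ j : ℤ, ∃ c : ℤ, |c| ≤ (M₀:ℤ) ∧ u c ≠ d.w (c + j) := by
    intro j
    have hP : (0:ℤ) < (d.P:ℤ) := mod_cast d.hP
    have hmod1 : 0 ≤ j % (d.P:ℤ) := Int.emod_nonneg _ (by positivity)
    have hmod2 : j % (d.P:ℤ) < (d.P:ℤ) := Int.emod_lt_of_pos _ hP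
    set j₀ : ℕ := (j % (d.P:ℤ)).toNat with hj₀
    have hj₀lt : j₀ < d.P := by omega
    refine ⟨cf j₀, by
      have := hM₀ j₀ hj₀lt
      rw [Int.abs_eq_natAbs]
      exact_mod_cast this, fun hcon => ?_⟩
    apply hcf j₀ hj₀lt
    rw [hcon]
    have hdvd : (d.P:ℤ) ∣ (j - j₀) := by
      have : (j₀ : ℤ) = j % d.P := by omega
      rw [this]
      exact Int.dvd_self_sub_of_emod_eq rfl
    rw [show cf j₀ + j = (cf j₀ + j₀) + (j - j₀) by ring]
    exact d.per_int _ hdvd _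
  -- matching at every scale, with bounded shift
  have match_at : ∀ M : ℕ, ∃ k : ℤ, ∀ c : ℤ, |c| ≤ (M:ℤ) → u c = d.x (c + k) :=
    fun M => match_of_mem_subshift hu M
  have bounded : ∀ M : ℕ, ∀ k : ℤ, (M₀ ≤ M) →
      (∀ c : ℤ, |c| ≤ (M:ℤ) → u c = d.x (c + k)) →
      d.i0 - M₀ < k ∧ k ≤ d.i0 + d.n0 + M₀ := by
    intro M k hMM hmatch
    constructor
    · by_contra hcon
      push_neg at hcon
      obtain ⟨c, hc, hne⟩ := key k
      apply hne
      rw [hmatch c (hc.trans (by exact_mod_cast hMM)),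
        d.hleft _ (by rw [abs_le] at hc; omega)]
    · by_contra hcon
      push_neg at hcon
      obtain ⟨c, hc, hne⟩ := key (k - d.n0)
      apply hne
      rw [hmatch c (hc.trans (by exact_mod_cast hMM)),
        d.hright _ (by rw [abs_le] at hc; omega)]
      try exact d.wc (by ring)
  -- pigeonhole
  choose kf hkf using match_at
  set S : Finset ℤ := Finset.Icc (d.i0 - M₀ + 1) (d.i0 + d.n0 + M₀) with hS
  have hfS : ∀ M : ℕ, kf (M + M₀) ∈ S := by
    intro M
    have := bounded (M + M₀) (kf (M + M₀)) (by omega) (hkf (M + M₀))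
    rw [hS, Finset.mem_Icc]; omega
  obtain ⟨y, hy⟩ := Finite.exists_infinite_fiber (fun M : ℕ => (⟨kf (M + M₀), hfS M⟩ : S))
  refine ⟨(y : ℤ), funext fun c => ?_⟩
  have hinf : ((fun M : ℕ => (⟨kf (M + M₀), hfS M⟩ : S)) ⁻¹' {y}).Infinite :=
    Set.infinite_coe_iff.mp hy
  obtain ⟨M, hM1, hM2⟩ := hinf.exists_gt c.natAbs
  have hkeq : kf (M + M₀) = (y : ℤ) := by
    have := hM1
    simp only [Set.mem_preimage, Set.mem_singleton_iff] at this
    exact congrArg Subtype.val this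
  have := hkf (M + M₀) c (by rw [Int.abs_eq_natAbs]; exact_mod_cast (by omega : c.natAbs ≤ M + M₀))
  rw [hkeq] at this
  exact this

/-- Orbit points are isolated in the subshift. -/
lemma isolated (k : ℤ) : ∃ M : ℕ, ∀ u, u ∈ subshiftGen d.x →
    (∀ c : ℤ, |c| ≤ (M:ℤ) → u c = d.x (c + k)) → u = shiftZ k d.x := by
  obtain ⟨M, hM⟩ : ∃ M : ℕ, |d.i0| + d.n0 + d.P + 1 + |k| ≤ (M:ℤ) := by
    refine ⟨(d.i0.natAbs + d.n0 + d.P + 1 + k.natAbs), ?_⟩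
    have h1 : |d.i0| = (d.i0.natAbs : ℤ) := Int.abs_eq_natAbs _
    have h2 : |k| = (k.natAbs : ℤ) := Int.abs_eq_natAbs _
    omega
  refine ⟨M, fun u hu hmatch => ?_⟩
  rcases d.mem_subshift_cases hu with ⟨k', rfl⟩ | ⟨j, rfl⟩
  · have : k' = k := d.eq_of_orbit_match k k' hM (fun c hc => hmatch c hc)
    rw [this]
  · exact absurd (d.not_w_match k j hM (fun c hc => hmatch c hc)) (by simp)

end EPData
section Kappa

/-- clamp to `[0,1]`. -/
noncomputable def clamp01 (t : ℝ) : ℝ := min 1 (max 0 t)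

lemma clamp01_of_nonpos {t : ℝ} (h : t ≤ 0) : clamp01 t = 0 := by
  unfold clamp01
  rw [max_eq_left h, min_eq_right zero_le_one]

lemma clamp01_of_one_le {t : ℝ} (h : 1 ≤ t) : clamp01 t = 1 := by
  unfold clamp01
  rw [max_eq_right (by linarith), min_eq_left h]

lemma clamp01_of_mem {t : ℝ} (h0 : 0 ≤ t) (h1 : t ≤ 1) : clamp01 t = t := by
  unfold clamp01
  rw [max_eq_right h0, min_eq_right h1]

lemma clamp01_mono : Monotone clamp01 :=
  fun _ _ h => min_le_min le_rfl (max_le_max le_rfl h)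

lemma clamp01_sub_antitone : Antitone (fun x : ℝ => clamp01 x - x) := by
  have hrw : (fun x : ℝ => clamp01 x - x) = fun x : ℝ => min (1 - x) (max (-x) 0) := by
    funext x
    unfold clamp01
    rw [← min_sub_sub_right 1 (0 ⊔ x) x, ← max_sub_sub_right 0 x x]
    ring_nf
  rw [hrw]
  apply Antitone.min
  · intro a b h; simp; linarith
  · apply Antitone.max
    · intro a b h; simp; linarith
    · exact antitone_const

lemma clamp01_lipschitz (a b : ℝ) : |clamp01 a - clamp01 b| ≤ |a - b| := by
  rcases le_total b a with h | h
  · rw [abs_of_nonneg (by linarith [clamp01_mono h]), abs_of_nonneg (by linarith)]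
    have := clamp01_sub_antitone h
    simp only at this
    linarith
  · rw [abs_sub_comm, abs_sub_comm a b]
    rw [abs_of_nonneg (by linarith [clamp01_mono h]), abs_of_nonneg (by linarith)]
    have := clamp01_sub_antitone h
    simp only at this
    linarith

lemma continuous_clamp01 : Continuous clamp01 :=
  (continuous_const.min ((continuous_const).max continuous_id))

/-- The piecewise-linear time change with slope `r` outside `[0,T]` and jump `β`. -/
noncomputable def kappaGen (r β T t : ℝ) : ℝ := r * t + β * clamp01 (t / T)

variable {r β T : ℝ}

lemma kappaGen_continuous : Continuous (kappaGen r β T) := by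
  unfold kappaGen
  exact (continuous_const.mul continuous_id).add
    (continuous_const.mul (continuous_clamp01.comp (continuous_id.div_const T)))

lemma kappaGen_Tpos (hr : 0 < r) (hT : |β| + 1 ≤ r * T) : 0 < T := by
  nlinarith [abs_nonneg β]

lemma kappaGen_of_nonpos (hr : 0 < r) (hT : |β| + 1 ≤ r * T) {t : ℝ} (h : t ≤ 0) :
    kappaGen r β T t = r * t := by
  have hTpos := kappaGen_Tpos hr hT
  unfold kappaGen
  rw [clamp01_of_nonpos (div_nonpos_of_nonpos_of_nonneg h hTpos.le), mul_zero, add_zero]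

lemma kappaGen_of_ge (hr : 0 < r) (hT : |β| + 1 ≤ r * T) {t : ℝ} (h : T ≤ t) :
    kappaGen r β T t = r * t + β := by
  have hTpos := kappaGen_Tpos hr hT
  unfold kappaGen
  rw [clamp01_of_one_le (by rw [le_div_iff₀ hTpos]; linarith), mul_one]

lemma kappaGen_of_mem (hr : 0 < r) (hT : |β| + 1 ≤ r * T) {t : ℝ} (h0 : 0 ≤ t) (h1 : t ≤ T) :
    kappaGen r β T t = r * t + β * (t / T) := by
  have hTpos := kappaGen_Tpos hr hT
  unfold kappaGen
  rw [clamp01_of_mem (by positivity) (by rw [div_le_one hTpos]; exact h1)]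

lemma kappaGen_strictMono (hr : 0 < r) (hT : |β| + 1 ≤ r * T) :
    StrictMono (kappaGen r β T) := by
  intro t t' hlt
  have hTpos := kappaGen_Tpos hr hT
  have hq : 0 < (t' - t) / T := div_pos (by linarith) hTpos
  have h1 : |clamp01 (t'/T) - clamp01 (t/T)| ≤ (t' - t)/T := by
    have := clamp01_lipschitz (t'/T) (t/T)
    rwa [show t'/T - t/T = (t' - t)/T by ring,
      abs_of_pos hq] at this
  have key1 : -(|β| * ((t' - t)/T)) ≤ β * (clamp01 (t'/T) - clamp01 (t/T)) := by
    have h2 : |β * (clamp01 (t'/T) - clamp01 (t/T))| ≤ |β| * ((t' - t)/T) := by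
      rw [abs_mul]
      exact mul_le_mul_of_nonneg_left h1 (abs_nonneg β)
    have := neg_abs_le (β * (clamp01 (t'/T) - clamp01 (t/T)))
    linarith
  have key2 : |β| * ((t' - t)/T) ≤ (r * T - 1) * ((t' - t)/T) :=
    mul_le_mul_of_nonneg_right (by linarith) hq.le
  have key3 : r * T * ((t' - t)/T) = r * t' - r * t := by
    field_simp
  show r * t + β * clamp01 (t/T) < r * t' + β * clamp01 (t'/T)
  nlinarith [key1, key2, key3, hq]

lemma kappaGen_inv (hr : 0 < r) (hT : |β| + 1 ≤ r * T) (t : ℝ) :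
    kappaGen (1/r) (-β/r) (r*T + β) (kappaGen r β T t) = t := by
  have hTpos := kappaGen_Tpos hr hT
  have hβ1 := neg_abs_le β
  have hβ2 := le_abs_self β
  have hT'pos : 0 < r * T + β := by linarith
  rcases le_or_gt t 0 with h | h
  · rw [kappaGen_of_nonpos hr hT h]
    have hrt : r * t ≤ 0 := mul_nonpos_iff.mpr (Or.inl ⟨hr.le, h⟩)
    unfold kappaGen
    rw [clamp01_of_nonpos (div_nonpos_of_nonpos_of_nonneg hrt hT'pos.le), mul_zero, add_zero]
    field_simp
  · rcases le_or_gt T t with h2 | h2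
    · rw [kappaGen_of_ge hr hT h2]
      unfold kappaGen
      rw [clamp01_of_one_le (by
        rw [le_div_iff₀ hT'pos]
        have : r * T ≤ r * t := mul_le_mul_of_nonneg_left h2 hr.le
        linarith)]
      field_simp
      ring
    · rw [kappaGen_of_mem hr hT h.le h2.le]
      have hs0 : 0 ≤ r * t + β * (t / T) := by
        have e0 : r * t + β * (t/T) = (r * T + β) * (t / T) := by field_simp
        rw [e0]
        exact mul_nonneg hT'pos.le (div_nonneg h.le hTpos.le)
      have hs1 : r * t + β * (t / T) ≤ r * T + β := by
        have e1 : r * t + β * (t/T) = (r * T + β) * (t / T) := by field_simp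
        have e2 : (r * T + β) * (t / T) ≤ (r * T + β) * 1 :=
          mul_le_mul_of_nonneg_left ((div_le_one hTpos).mpr h2.le) hT'pos.le
        rw [e1]; linarith
      unfold kappaGen
      rw [clamp01_of_mem (by positivity) (by rw [div_le_one hT'pos]; exact hs1)]
      field_simp
      ring
end Kappa
namespace EPData

section Pair

variable {A B : Type*}

/-- slope of the time change -/
noncomputable def rr (d₁ : EPData A) (d₂ : EPData B) : ℝ := (d₂.P : ℝ) / (d₁.P : ℝ)

noncomputable def bb (d₁ : EPData A) (d₂ : EPData B) : ℝ :=
  (d₂.n0 : ℝ) - rr d₁ d₂ * (d₁.n0 : ℝ)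

noncomputable def TT (d₁ : EPData A) (d₂ : EPData B) : ℝ :=
  ((3 * |bb d₁ d₂| - bb d₁ d₂) / 2 + 1 + rr d₁ d₂) / rr d₁ d₂

noncomputable def kap (d₁ : EPData A) (d₂ : EPData B) : ℝ → ℝ :=
  kappaGen (rr d₁ d₂) (bb d₁ d₂) (TT d₁ d₂)

variable (d₁ : EPData A) (d₂ : EPData B)

lemma P1pos : (0:ℝ) < ((d₁.P : ℕ) : ℝ) := by exact_mod_cast d₁.hP

lemma rr_pos : 0 < rr d₁ d₂ := div_pos (P1pos d₂) (P1pos d₁)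

lemma hTcond : |bb d₁ d₂| + 1 ≤ rr d₁ d₂ * TT d₁ d₂ := by
  have hr := rr_pos d₁ d₂
  have : rr d₁ d₂ * TT d₁ d₂ = (3 * |bb d₁ d₂| - bb d₁ d₂) / 2 + 1 + rr d₁ d₂ := by
    unfold TT; field_simp
  rw [this]
  have h1 := le_abs_self (bb d₁ d₂)
  have h2 := abs_nonneg (bb d₁ d₂)
  linarith

lemma rr_swap : rr d₂ d₁ = 1 / rr d₁ d₂ := by
  unfold rr
  rw [one_div_div]

lemma rr_mul : rr d₂ d₁ * rr d₁ d₂ = 1 := by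
  rw [rr_swap]
  field_simp [(rr_pos d₁ d₂).ne']

lemma bb_swap : bb d₂ d₁ = -(bb d₁ d₂) / rr d₁ d₂ := by
  unfold bb rr
  have h1 := (P1pos d₁).ne'
  have h2 := (P1pos d₂).ne'
  field_simp
  ring

lemma TT_swap : TT d₂ d₁ = rr d₁ d₂ * TT d₁ d₂ + bb d₁ d₂ := by
  have hr := rr_pos d₁ d₂
  have habs : |bb d₂ d₁| = |bb d₁ d₂| / rr d₁ d₂ := by
    rw [bb_swap, abs_div, abs_neg, abs_of_pos hr]
  unfold TT
  rw [habs, bb_swap, rr_swap]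
  field_simp
  ring

lemma kap_inv (t : ℝ) : kap d₂ d₁ (kap d₁ d₂ t) = t := by
  have := kappaGen_inv (rr_pos d₁ d₂) (hTcond d₁ d₂) t
  unfold kap
  rw [rr_swap, bb_swap, TT_swap]
  exact this

lemma kap_strictMono : StrictMono (kap d₁ d₂) :=
  kappaGen_strictMono (rr_pos d₁ d₂) (hTcond d₁ d₂)

lemma kap_continuous : Continuous (kap d₁ d₂) := kappaGen_continuous

lemma kap_bijective : Function.Bijective (kap d₁ d₂) :=
  ⟨(kap_strictMono d₁ d₂).injective, fun s => ⟨kap d₂ d₁ s, kap_inv d₂ d₁ s⟩⟩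

lemma kap_nonpos {t : ℝ} (h : t ≤ 0) : kap d₁ d₂ t = rr d₁ d₂ * t :=
  kappaGen_of_nonpos (rr_pos d₁ d₂) (hTcond d₁ d₂) h

lemma kap_ge {t : ℝ} (h : TT d₁ d₂ ≤ t) :
    kap d₁ d₂ t = rr d₁ d₂ * (t - (d₁.n0 : ℝ)) + (d₂.n0 : ℝ) := by
  rw [kap, kappaGen_of_ge (rr_pos d₁ d₂) (hTcond d₁ d₂) h]
  unfold bb
  ring

lemma rr_mul_P : rr d₁ d₂ * ((d₁.P : ℕ) : ℝ) = ((d₂.P : ℕ) : ℝ) := by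
  unfold rr
  rw [div_mul_eq_mul_div, mul_div_assoc, div_self (P1pos d₁).ne', mul_one]

end Pair

section SuspHelp

variable {A : Type*} [TopologicalSpace A] [DiscreteTopology A]

lemma susp_mk_shift {X : Set (ℤ → A)} {u : ℤ → A} (hu : u ∈ X) (m : ℤ)
    (hu' : shiftZ m u ∈ X) (s : ℝ) :
    Quot.mk (SuspRel X) (⟨u, hu⟩, s + (m:ℝ)) = Quot.mk _ (⟨shiftZ m u, hu'⟩, s) := by
  apply Quot.sound
  exact ⟨m, rfl, by push_cast; ring⟩

variable (d : EPData A)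

lemma w_mem : d.w ∈ subshiftGen d.x := by
  have := d.w_shift_mem 0
  rwa [shiftZ_zero] at this

lemma shiftZ_w_eq (m : ℤ) (h : (d.P:ℤ) ∣ m) : shiftZ m d.w = d.w :=
  funext fun i => d.per_int m h i

lemma w_mk_eq (c : ℝ) (m : ℤ) (h : (d.P:ℤ) ∣ m) :
    Quot.mk (SuspRel (subshiftGen d.x)) (⟨d.w, d.w_mem⟩, c + (m:ℝ))
      = Quot.mk _ (⟨d.w, d.w_mem⟩, c) := by
  have he : shiftZ m d.w = d.w := d.shiftZ_w_eq m h
  have h2 := susp_mk_shift (X := subshiftGen d.x) d.w_mem m (by rw [he]; exact d.w_mem) c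
  rw [h2]
  congr 1
  exact Prod.ext (Subtype.ext he) rfl

end SuspHelp

section Hdef

variable {A B : Type*} [TopologicalSpace A] [DiscreteTopology A]
  [TopologicalSpace B] [DiscreteTopology B]

variable (d₁ : EPData A) (d₂ : EPData B)

/-- The map inducing the flow equivalence on suspensions. -/
noncomputable def Hmap (p : ↥(subshiftGen d₁.x) × ℝ) : Susp (subshiftGen d₂.x) :=
  if h : ∃ k : ℤ, (p.1 : ℤ → A) = shiftZ k d₁.x then
    Quot.mk _ (⟨d₂.x, self_mem_subshiftGen _⟩, kap d₁ d₂ ((h.choose : ℝ) + p.2))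
  else
    Quot.mk _ (⟨d₂.w, d₂.w_mem⟩,
      rr d₁ d₂ * ((((d₁.mem_subshift_cases p.1.2).resolve_left h).choose : ℝ) + p.2))

lemma Hmap_orbit {u : ℤ → A} (hu : u ∈ subshiftGen d₁.x) (k : ℤ)
    (hk : u = shiftZ k d₁.x) (s : ℝ) :
    Hmap d₁ d₂ (⟨u, hu⟩, s)
      = Quot.mk _ (⟨d₂.x, self_mem_subshiftGen _⟩, kap d₁ d₂ ((k:ℝ) + s)) := by
  have hex : ∃ k' : ℤ, ((⟨u, hu⟩ : ↥(subshiftGen d₁.x)) : ℤ → A) = shiftZ k' d₁.x :=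
    ⟨k, hk⟩
  unfold Hmap; refine (dif_pos hex).trans ?_
  have hcs : hex.choose = k := by
    apply d₁.x_eq_shift_iff
    intro c
    have h1 : shiftZ hex.choose d₁.x = shiftZ k d₁.x := by
      rw [← hex.choose_spec]; exact hk
    exact congrFun h1 c
  rw [hcs]

lemma Hmap_w {u : ℤ → A} (hu : u ∈ subshiftGen d₁.x) (j : ℤ)
    (hj : u = shiftZ j d₁.w) (s : ℝ) :
    Hmap d₁ d₂ (⟨u, hu⟩, s)
      = Quot.mk _ (⟨d₂.w, d₂.w_mem⟩, rr d₁ d₂ * ((j:ℝ) + s)) := by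
  have hnex : ¬ ∃ k : ℤ, ((⟨u, hu⟩ : ↥(subshiftGen d₁.x)) : ℤ → A) = shiftZ k d₁.x := by
    rintro ⟨k, hk⟩
    apply d₁.not_allmatch k j
    intro c
    have := congrFun (hk.symm.trans hj) c
    exact this
  unfold Hmap; refine (dif_neg hnex).trans ?_
  set hex := (d₁.mem_subshift_cases (⟨u, hu⟩ : ↥(subshiftGen d₁.x)).2).resolve_left hnex
    with hhex
  obtain ⟨m, hm⟩ : ∃ m : ℤ, hex.choose = j + d₁.P * m := by
    have h1 : shiftZ hex.choose d₁.w = shiftZ j d₁.w := by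
      rw [← hex.choose_spec]; exact hj
    have h2 : (d₁.P:ℤ) ∣ (hex.choose - j) := by
      apply d₁.hleast
      intro a
      have h4 := congrFun h1 (a - j)
      show d₁.w (a + (hex.choose - j)) = d₁.w a
      have h5 : d₁.w (a - j + hex.choose) = d₁.w (a - j + j) := h4
      rw [d₁.wc (show a + (hex.choose - j) = a - j + hex.choose by ring), h5,
        d₁.wc (show a - j + j = a by ring)]
    obtain ⟨m, hm2⟩ := h2
    exact ⟨m, by omega⟩
  rw [hm]
  have e1 : rr d₁ d₂ * (((j + d₁.P * m : ℤ) : ℝ) + s)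
      = rr d₁ d₂ * ((j:ℝ) + s) + ((d₂.P * m : ℤ) : ℝ) := by
    push_cast
    rw [show rr d₁ d₂ * ((j:ℝ) + (d₁.P:ℝ) * (m:ℝ) + s)
        = rr d₁ d₂ * ((j:ℝ) + s) + (rr d₁ d₂ * (d₁.P:ℝ)) * (m:ℝ) by ring, rr_mul_P]
  rw [e1]
  exact d₂.w_mk_eq _ _ ⟨m, by ring⟩

end Hdef

end EPData
namespace EPData

section Hbar

variable {A B : Type*} [TopologicalSpace A] [DiscreteTopology A]
  [TopologicalSpace B] [DiscreteTopology B]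

variable (d₁ : EPData A) (d₂ : EPData B)

lemma Hmap_sound : ∀ p q, SuspRel (subshiftGen d₁.x) p q → Hmap d₁ d₂ p = Hmap d₁ d₂ q := by
  rintro ⟨⟨u, hu⟩, s⟩ ⟨⟨u', hu'⟩, s'⟩ ⟨m, h1, h2⟩
  simp only at h1 h2
  rcases d₁.mem_subshift_cases hu with ⟨k, hk⟩ | ⟨j, hj⟩
  · rw [Hmap_orbit d₁ d₂ hu k hk s,
      Hmap_orbit d₁ d₂ hu' (k + m) (by rw [h1, hk, shiftZ_shiftZ, add_comm m k]) s']
    have : ((k:ℝ) + s) = (((k + m : ℤ)):ℝ) + s' := by rw [h2]; push_cast; ring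
    rw [this]
  · rw [Hmap_w d₁ d₂ hu j hj s,
      Hmap_w d₁ d₂ hu' (j + m) (by rw [h1, hj, shiftZ_shiftZ, add_comm m j]) s']
    have : ((j:ℝ) + s) = (((j + m : ℤ)):ℝ) + s' := by rw [h2]; push_cast; ring
    rw [this]

/-- The induced map on suspensions. -/
noncomputable def hbar : Susp (subshiftGen d₁.x) → Susp (subshiftGen d₂.x) :=
  Quot.lift (Hmap d₁ d₂) (Hmap_sound d₁ d₂)

lemma hbar_mk (p : ↥(subshiftGen d₁.x) × ℝ) :
    hbar d₁ d₂ (Quot.mk _ p) = Hmap d₁ d₂ p := rfl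

lemma hbar_hbar : ∀ z, hbar d₂ d₁ (hbar d₁ d₂ z) = z := by
  apply Quot.ind
  rintro ⟨⟨u, hu⟩, s⟩
  rcases d₁.mem_subshift_cases hu with ⟨k, hk⟩ | ⟨j, hj⟩
  · rw [hbar_mk, Hmap_orbit d₁ d₂ hu k hk s, hbar_mk,
      Hmap_orbit d₂ d₁ (self_mem_subshiftGen d₂.x) 0 (shiftZ_zero d₂.x).symm _]
    rw [show ((0:ℤ):ℝ) + kap d₁ d₂ ((k:ℝ) + s) = kap d₁ d₂ ((k:ℝ) + s) by push_cast; ring]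
    rw [kap_inv]
    subst hk
    rw [show (k:ℝ) + s = s + (k:ℝ) by ring,
      susp_mk_shift (self_mem_subshiftGen d₁.x) k hu s]
  · rw [hbar_mk, Hmap_w d₁ d₂ hu j hj s, hbar_mk,
      Hmap_w d₂ d₁ d₂.w_mem 0 (shiftZ_zero d₂.w).symm _]
    have e1 : rr d₂ d₁ * (((0:ℤ):ℝ) + rr d₁ d₂ * ((j:ℝ) + s)) = (j:ℝ) + s := by
      push_cast
      rw [zero_add, ← mul_assoc, rr_mul, one_mul]
    rw [e1]
    subst hj
    rw [show (j:ℝ) + s = s + (j:ℝ) by ring,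
      susp_mk_shift d₁.w_mem j hu s]

end Hbar

end EPData
namespace EPData

section Cong2

variable {A : Type*} (d : EPData A)

lemma cong_left' (k j : ℤ) {M : ℕ} (hMP : (d.P:ℤ) ≤ (M:ℤ)) (hk : k + d.P ≤ d.i0 + 1)
    (h : ∀ c : ℤ, |c| ≤ (M:ℤ) → d.x (c + k) = d.w (c + j)) : (d.P:ℤ) ∣ (j - k) := by
  have hP : (0:ℤ) < (d.P:ℤ) := mod_cast d.hP
  apply d.dvd_of_block (a₀ := k)
  intro t ht1 ht2
  have h0 := h t (by rw [abs_le]; omega)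
  rw [d.hleft (t + k) (by omega)] at h0
  rw [d.wc (show k + t + (j - k) = t + j by ring), d.wc (show k + t = t + k by ring)]
  exact h0.symm

lemma cong_right' (k j : ℤ) {M : ℕ} (hMP : (d.P:ℤ) ≤ (M:ℤ)) (hk : d.i0 + d.n0 < k)
    (h : ∀ c : ℤ, |c| ≤ (M:ℤ) → d.x (c + k) = d.w (c + j)) :
    (d.P:ℤ) ∣ (j + d.n0 - k) := by
  have hP : (0:ℤ) < (d.P:ℤ) := mod_cast d.hP
  apply d.dvd_of_block (a₀ := k - d.n0)
  intro t ht1 ht2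
  have h0 := h t (by rw [abs_le]; omega)
  rw [d.hright (t + k) (by omega)] at h0
  rw [d.wc (show k - d.n0 + t + (j + d.n0 - k) = t + j by ring),
    d.wc (show k - (d.n0:ℤ) + t = t + k - d.n0 by ring)]
  exact h0.symm

lemma w_cong (j' j : ℤ) {M : ℕ} (hMP : (d.P:ℤ) ≤ (M:ℤ))
    (h : ∀ c : ℤ, |c| ≤ (M:ℤ) → d.w (c + j') = d.w (c + j)) : (d.P:ℤ) ∣ (j' - j) := by
  have hP : (0:ℤ) < (d.P:ℤ) := mod_cast d.hP
  apply d.dvd_of_block (a₀ := j)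
  intro t ht1 ht2
  have h0 := h t (by rw [abs_le]; omega)
  rw [d.wc (show j + t + (j' - j) = t + j' by ring), d.wc (show j + t = t + j by ring)]
  exact h0

end Cong2

section Cont

variable {A B : Type*} [TopologicalSpace A] [DiscreteTopology A]
  [TopologicalSpace B] [DiscreteTopology B]

variable (d₁ : EPData A) (d₂ : EPData B)

lemma Hmap_continuous : Continuous (Hmap d₁ d₂) := by
  rw [continuous_iff_continuousAt]
  rintro ⟨⟨u, hu⟩, s⟩
  rw [ContinuousAt, tendsto_nhds]
  intro O hO hmem
  have hUopen : IsOpen (Quot.mk (SuspRel (subshiftGen d₂.x)) ⁻¹' O) :=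
    isQuotientMap_quot_mk.isOpen_preimage.mpr hO
  rcases d₁.mem_subshift_cases hu with ⟨k, hk⟩ | ⟨j, hj⟩
  -- CASE 1 : orbit point (isolated)
  · rw [Hmap_orbit d₁ d₂ hu k hk s] at hmem
    obtain ⟨F, δ, hδ, hbasic⟩ := basic_nbhd hUopen (self_mem_subshiftGen d₂.x) hmem
    obtain ⟨δ', hδ'pos, hκ⟩ := Metric.continuous_iff.mp (kap_continuous d₁ d₂) ((k:ℝ)+s) δ hδ
    obtain ⟨M, hMiso⟩ := d₁.isolated k
    set Wc : Set ↥(subshiftGen d₁.x) :=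
      Subtype.val ⁻¹' {z : ℤ → A | ∀ c : ℤ, |c| ≤ (M:ℤ) → z c = u c} with hWc
    have hWnhds : Wc ×ˢ Metric.ball s δ' ∈ nhds ((⟨u, hu⟩ : ↥(subshiftGen d₁.x)), s) := by
      apply prod_mem_nhds
      · exact ((isOpen_cylinder u M).preimage continuous_subtype_val).mem_nhds
          (fun c _ => rfl)
      · exact Metric.ball_mem_nhds s hδ'pos
    refine Filter.mem_of_superset hWnhds ?_
    rintro ⟨⟨u', hu'⟩, s'⟩ ⟨hcyl, hball⟩
    have hcyl' : ∀ c : ℤ, |c| ≤ (M:ℤ) → u' c = u c := hcyl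
    have hu'eq : u' = shiftZ k d₁.x :=
      hMiso u' hu' (fun c hc => by rw [hcyl' c hc, hk]; rfl)
    show Hmap d₁ d₂ (⟨u', hu'⟩, s') ∈ O
    rw [Hmap_orbit d₁ d₂ hu' k hu'eq s']
    apply hbasic d₂.x (self_mem_subshiftGen d₂.x) _ (fun c _ => rfl)
    have hd : dist ((k:ℝ)+s') ((k:ℝ)+s) < δ' := by
      rw [Real.dist_eq, show (k:ℝ) + s' - ((k:ℝ) + s) = s' - s by ring, ← Real.dist_eq]
      exact Metric.mem_ball.mp hball
    have := hκ ((k:ℝ)+s') hd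
    rwa [Real.dist_eq] at this
  -- CASE 2 : periodic point
  · rw [Hmap_w d₁ d₂ hu j hj s] at hmem
    obtain ⟨F, δ, hδ, hbasic⟩ := basic_nbhd hUopen d₂.w_mem hmem
    have hrpos : 0 < rr d₁ d₂ := rr_pos d₁ d₂
    have hTpos : 0 < TT d₁ d₂ := kappaGen_Tpos hrpos (hTcond d₁ d₂)
    set δ' := min 1 (δ / (rr d₁ d₂ + 1)) with hδ'
    have hδ'pos : 0 < δ' := lt_min one_pos (div_pos hδ (by linarith))
    have hδ'le1 : δ' ≤ 1 := min_le_left _ _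
    have hδ'r : rr d₁ d₂ * δ' < δ := by
      have h1 : δ' ≤ δ / (rr d₁ d₂ + 1) := min_le_right _ _
      have h2 : rr d₁ d₂ * δ' ≤ rr d₁ d₂ * (δ / (rr d₁ d₂ + 1)) :=
        mul_le_mul_of_nonneg_left h1 hrpos.le
      have h3 : rr d₁ d₂ * (δ / (rr d₁ d₂ + 1)) < δ := by
        rw [mul_div_assoc', div_lt_iff₀ (by linarith)]
        nlinarith
      linarith
    obtain ⟨Kt, hKt⟩ := exists_int_gt (TT d₁ d₂ + |s| + 1)
    set X₂ : ℕ := F + d₂.i0.natAbs + d₂.n0 + 1 with hX₂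
    set Kz : ℤ := (j.natAbs:ℤ) + (Kt.natAbs:ℤ) + (d₁.P:ℤ) * (X₂:ℤ) + d₁.P + d₁.n0
      + d₁.i0.natAbs + 2 with hKz
    have hPX : (0:ℤ) ≤ (d₁.P:ℤ) * (X₂:ℤ) := by positivity
    have hKreal : TT d₁ d₂ + |s| + 1 ≤ (Kz:ℝ) := by
      have h1 : (Kt:ℝ) ≤ (Kz:ℝ) := by exact_mod_cast (by omega : Kt ≤ Kz)
      linarith
    -- exclusion witnesses for middle k
    have hex : ∀ k₀ : ℤ, ∃ c : ℤ, d₁.x (c + k₀) ≠ d₁.w (c + j) := by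
      intro k₀; by_contra hcon; push_neg at hcon; exact d₁.not_allmatch k₀ j hcon
    choose cex hcex using hex
    obtain ⟨M, hM1, hM2⟩ : ∃ M : ℕ, (d₁.P:ℤ) ≤ (M:ℤ) ∧
        ∀ k₀ : ℤ, -Kz ≤ k₀ → k₀ ≤ Kz → (cex k₀).natAbs ≤ M := by
      refine ⟨d₁.P + (Finset.Icc (-Kz) Kz).sup (fun k₀ => (cex k₀).natAbs),
        by push_cast; omega, ?_⟩
      intro k₀ h1' h2'
      have h1 : (cex k₀).natAbs ≤ (Finset.Icc (-Kz) Kz).sup (fun k₀ => (cex k₀).natAbs) :=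
        Finset.le_sup (f := fun k₀ => (cex k₀).natAbs)
          (Finset.mem_Icc.mpr ⟨h1', h2'⟩)
      omega
    set Wc : Set ↥(subshiftGen d₁.x) :=
      Subtype.val ⁻¹' {z : ℤ → A | ∀ c : ℤ, |c| ≤ (M:ℤ) → z c = u c} with hWc
    have hWnhds : Wc ×ˢ Metric.ball s δ' ∈ nhds ((⟨u, hu⟩ : ↥(subshiftGen d₁.x)), s) := by
      apply prod_mem_nhds
      · exact ((isOpen_cylinder u M).preimage continuous_subtype_val).mem_nhds
          (fun c _ => rfl)
      · exact Metric.ball_mem_nhds s hδ'pos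
    refine Filter.mem_of_superset hWnhds ?_
    rintro ⟨⟨u', hu'⟩, s'⟩ ⟨hcyl, hball⟩
    have hcyl' : ∀ c : ℤ, |c| ≤ (M:ℤ) → u' c = u c := hcyl
    have hball' : |s' - s| < δ' := by rw [← Real.dist_eq]; exact Metric.mem_ball.mp hball
    have hs'bnd : |s'| ≤ |s| + 1 := by
      have := abs_sub_abs_le_abs_sub s' s
      linarith
    have hdist : |rr d₁ d₂ * ((j:ℝ) + s') - rr d₁ d₂ * ((j:ℝ) + s)| < δ := by
      rw [show rr d₁ d₂ * ((j:ℝ) + s') - rr d₁ d₂ * ((j:ℝ) + s)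
          = rr d₁ d₂ * (s' - s) by ring, abs_mul, abs_of_pos hrpos]
      calc rr d₁ d₂ * |s' - s| ≤ rr d₁ d₂ * δ' := by
            exact mul_le_mul_of_nonneg_left hball'.le hrpos.le
        _ < δ := hδ'r
    show Hmap d₁ d₂ (⟨u', hu'⟩, s') ∈ O
    rcases d₁.mem_subshift_cases hu' with ⟨k, hk⟩ | ⟨j', hj'⟩
    · -- u' on the orbit of x₁
      have hmatch : ∀ c : ℤ, |c| ≤ (M:ℤ) → d₁.x (c + k) = d₁.w (c + j) := by
        intro c hc
        calc d₁.x (c + k) = u' c := by rw [hk]; rfl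
          _ = u c := hcyl' c hc
          _ = d₁.w (c + j) := by rw [hj]; rfl
      have hnotmid : ¬ (-Kz ≤ k ∧ k ≤ Kz) := by
        rintro ⟨h1', h2'⟩
        exact hcex k (hmatch (cex k)
          (by rw [Int.abs_eq_natAbs]; exact_mod_cast hM2 k h1' h2'))
      rcases (by omega : k < -Kz ∨ Kz < k) with hneg | hpos
      · -- far left
        obtain ⟨m, hm⟩ := d₁.cong_left' k j hM1 (by omega) hmatch
        have hm' : j - k = (d₁.P:ℤ) * m := hm
        have hP1 : (0:ℤ) < (d₁.P:ℤ) := mod_cast d₁.hP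
        have hmbig : (X₂:ℤ) ≤ m := by
          have h1 : (d₁.P:ℤ) * (X₂:ℤ) ≤ (d₁.P:ℤ) * m := by omega
          exact le_of_mul_le_mul_left h1 hP1
        have hmX : (F:ℤ) + d₂.i0.natAbs + 1 ≤ (d₂.P:ℤ) * m := by
          have h2 : (m:ℤ) ≤ (d₂.P:ℤ) * m :=
            le_mul_of_one_le_left (by omega) (by exact_mod_cast d₂.hP)
          omega
        have hksz : (k:ℝ) + s' ≤ 0 := by
          have hk1 : (k:ℝ) ≤ -(Kz:ℝ) := by exact_mod_cast (by omega : k ≤ -Kz)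
          have := le_abs_self s'
          linarith
        have hkap : kap d₁ d₂ ((k:ℝ) + s')
            = rr d₁ d₂ * ((j:ℝ) + s') + ((-(d₂.P * m) : ℤ):ℝ) := by
          rw [kap_nonpos d₁ d₂ hksz]
          have hki : k = j - (d₁.P:ℤ) * m := by omega
          have hkm : (k:ℝ) = (j:ℝ) - (d₁.P:ℝ) * (m:ℝ) := by
            rw [hki]; push_cast; ring
          rw [hkm]
          push_cast
          rw [show rr d₁ d₂ * ((j:ℝ) - (d₁.P:ℝ) * m + s')
              = rr d₁ d₂ * ((j:ℝ) + s') + -((rr d₁ d₂ * (d₁.P:ℝ)) * m) by ring, rr_mul_P]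
          try push_cast
          try ring
        rw [Hmap_orbit d₁ d₂ hu' k hk s', hkap,
          susp_mk_shift (self_mem_subshiftGen d₂.x) (-(d₂.P * m))
            (shiftZ_mem_subshiftGen _ _) _]
        apply hbasic _ _ _ ?_ hdist
        -- matching of the representative with w₂
        intro c hc
        show d₂.x (c + -(d₂.P * m)) = d₂.w c
        rw [d₂.hleft _ (by rw [abs_le] at hc; omega)]
        rw [d₂.wc (show c + -(d₂.P * m : ℤ) = c + (-(d₂.P * m)) by ring)]
        exact d₂.per_int _ ⟨-m, by ring⟩ c
      · -- far right
        obtain ⟨m0, hm0⟩ := d₁.cong_right' k j hM1 (by omega) hmatch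
        have hP1 : (0:ℤ) < (d₁.P:ℤ) := mod_cast d₁.hP
        obtain ⟨m, hm⟩ : ∃ m : ℤ, k = j + d₁.n0 + d₁.P * m := by
          refine ⟨-m0, by
            have : j + (d₁.n0:ℤ) - k = d₁.P * m0 := hm0
            rw [mul_neg]; omega⟩
        have hmbig : (X₂:ℤ) ≤ m := by
          have h1 : (d₁.P:ℤ) * (X₂:ℤ) ≤ (d₁.P:ℤ) * m := by omega
          exact le_of_mul_le_mul_left h1 hP1
        have hmX : (F:ℤ) + d₂.i0.natAbs + 1 ≤ (d₂.P:ℤ) * m := by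
          have h2 : (m:ℤ) ≤ (d₂.P:ℤ) * m :=
            le_mul_of_one_le_left (by omega) (by exact_mod_cast d₂.hP)
          omega
        have hksz : TT d₁ d₂ ≤ (k:ℝ) + s' := by
          have hk1 : (Kz:ℝ) + 1 ≤ (k:ℝ) := by exact_mod_cast (by omega : Kz + 1 ≤ k)
          have := neg_abs_le s'
          linarith
        have hkap : kap d₁ d₂ ((k:ℝ) + s')
            = rr d₁ d₂ * ((j:ℝ) + s') + (((d₂.n0:ℤ) + d₂.P * m : ℤ):ℝ) := by
          rw [kap_ge d₁ d₂ hksz]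
          have hkm : (k:ℝ) = (j:ℝ) + (d₁.n0:ℝ) + (d₁.P:ℝ) * (m:ℝ) := by
            rw [hm]; push_cast; ring
          rw [hkm]
          push_cast
          rw [show rr d₁ d₂ * ((j:ℝ) + (d₁.n0:ℝ) + (d₁.P:ℝ) * m + s' - (d₁.n0:ℝ))
              = rr d₁ d₂ * ((j:ℝ) + s') + (rr d₁ d₂ * (d₁.P:ℝ)) * m by ring, rr_mul_P]
          try push_cast
          try ring
        rw [Hmap_orbit d₁ d₂ hu' k hk s', hkap,
          susp_mk_shift (self_mem_subshiftGen d₂.x) ((d₂.n0:ℤ) + d₂.P * m)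
            (shiftZ_mem_subshiftGen _ _) _]
        apply hbasic _ _ _ ?_ hdist
        intro c hc
        show d₂.x (c + ((d₂.n0:ℤ) + d₂.P * m)) = d₂.w c
        rw [d₂.hright _ (by rw [abs_le] at hc; omega)]
        rw [d₂.wc (show c + ((d₂.n0:ℤ) + d₂.P * m) - d₂.n0 = c + d₂.P * m by ring)]
        exact d₂.per_int _ ⟨m, rfl⟩ c
    · -- u' in the orbit of w₁
      have hmatch : ∀ c : ℤ, |c| ≤ (M:ℤ) → d₁.w (c + j') = d₁.w (c + j) := by
        intro c hc
        calc d₁.w (c + j') = u' c := by rw [hj']; rfl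
          _ = u c := hcyl' c hc
          _ = d₁.w (c + j) := by rw [hj]; rfl
      obtain ⟨m, hm⟩ := d₁.w_cong j' j hM1 hmatch
      have hji : j' = j + (d₁.P:ℤ) * m := by omega
      have hj'm : (j':ℝ) = (j:ℝ) + (d₁.P:ℝ) * (m:ℝ) := by
        rw [hji]; push_cast; ring
      rw [Hmap_w d₁ d₂ hu' j' hj' s']
      have e1 : rr d₁ d₂ * ((j':ℝ) + s')
          = rr d₁ d₂ * ((j:ℝ) + s') + ((d₂.P * m : ℤ):ℝ) := by
        rw [hj'm]
        push_cast
        rw [show rr d₁ d₂ * ((j:ℝ) + (d₁.P:ℝ) * m + s')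
            = rr d₁ d₂ * ((j:ℝ) + s') + (rr d₁ d₂ * (d₁.P:ℝ)) * m by ring, rr_mul_P]
      rw [e1, d₂.w_mk_eq _ _ ⟨m, by ring⟩]
      exact hbasic _ _ _ (fun c _ => rfl) hdist

end Cont

end EPData
section Assemble

variable {A B : Type*} [TopologicalSpace A] [DiscreteTopology A]
  [TopologicalSpace B] [DiscreteTopology B]

open EPData

lemma hbar_continuous (d₁ : EPData A) (d₂ : EPData B) : Continuous (hbar d₁ d₂) :=
  continuous_quot_lift _ (Hmap_continuous d₁ d₂)

/-- The homeomorphism of suspensions. -/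
noncomputable def suspHomeo (d₁ : EPData A) (d₂ : EPData B) :
    Susp (subshiftGen d₁.x) ≃ₜ Susp (subshiftGen d₂.x) where
  toFun := hbar d₁ d₂
  invFun := hbar d₂ d₁
  left_inv := hbar_hbar d₁ d₂
  right_inv := hbar_hbar d₂ d₁
  continuous_toFun := hbar_continuous d₁ d₂
  continuous_invFun := hbar_continuous d₂ d₁

lemma flow_compat (d₁ : EPData A) (d₂ : EPData B) :
    ∀ z, ∃ τ : ℝ → ℝ, StrictMono τ ∧ Function.Bijective τ ∧ τ 0 = 0 ∧
      ∀ t, hbar d₁ d₂ (suspFlow (subshiftGen d₁.x) t z)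
        = suspFlow (subshiftGen d₂.x) (τ t) (hbar d₁ d₂ z) := by
  apply Quot.ind
  rintro ⟨⟨u, hu⟩, s⟩
  rcases d₁.mem_subshift_cases hu with ⟨k, hk⟩ | ⟨j, hj⟩
  · refine ⟨fun t => kap d₁ d₂ ((k:ℝ) + s + t) - kap d₁ d₂ ((k:ℝ) + s), ?_, ?_, by simp, ?_⟩
    · intro a b hab
      have := kap_strictMono d₁ d₂ (show (k:ℝ) + s + a < (k:ℝ) + s + b by linarith)
      simp only
      linarith
    · refine Function.bijective_iff_has_inverse.mpr
        ⟨fun r => kap d₂ d₁ (kap d₁ d₂ ((k:ℝ) + s) + r) - ((k:ℝ) + s), ?_, ?_⟩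
      · intro t
        simp only
        rw [show kap d₁ d₂ ((k:ℝ)+s) + (kap d₁ d₂ ((k:ℝ)+s+t) - kap d₁ d₂ ((k:ℝ)+s))
            = kap d₁ d₂ ((k:ℝ)+s+t) by ring, kap_inv]
        ring
      · intro r
        simp only
        rw [show (k:ℝ) + s + (kap d₂ d₁ (kap d₁ d₂ ((k:ℝ)+s) + r) - ((k:ℝ)+s))
            = kap d₂ d₁ (kap d₁ d₂ ((k:ℝ)+s) + r) by ring, kap_inv]
        ring
    · intro t
      have e1 : suspFlow (subshiftGen d₁.x) t (Quot.mk _ (⟨u, hu⟩, s))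
          = Quot.mk _ (⟨u, hu⟩, s + t) := rfl
      rw [e1, hbar_mk, Hmap_orbit d₁ d₂ hu k hk (s + t), hbar_mk,
        Hmap_orbit d₁ d₂ hu k hk s]
      have e2 : suspFlow (subshiftGen d₂.x)
          (kap d₁ d₂ ((k:ℝ) + s + t) - kap d₁ d₂ ((k:ℝ) + s))
          (Quot.mk _ (⟨d₂.x, self_mem_subshiftGen d₂.x⟩, kap d₁ d₂ ((k:ℝ) + s)))
          = Quot.mk _ (⟨d₂.x, self_mem_subshiftGen d₂.x⟩,
              kap d₁ d₂ ((k:ℝ) + s) + (kap d₁ d₂ ((k:ℝ) + s + t) - kap d₁ d₂ ((k:ℝ) + s))) :=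
        rfl
      rw [e2,
        show kap d₁ d₂ ((k:ℝ)+s) + (kap d₁ d₂ ((k:ℝ)+s+t) - kap d₁ d₂ ((k:ℝ)+s))
            = kap d₁ d₂ ((k:ℝ)+s+t) by ring,
        show (k:ℝ) + (s + t) = (k:ℝ) + s + t by ring]
  · refine ⟨fun t => rr d₁ d₂ * t, ?_, ?_, by simp, ?_⟩
    · intro a b hab
      exact mul_lt_mul_of_pos_left hab (rr_pos d₁ d₂)
    · refine Function.bijective_iff_has_inverse.mpr
        ⟨fun r => rr d₂ d₁ * r, ?_, ?_⟩
      · intro t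
        simp only
        rw [← mul_assoc, rr_mul d₁ d₂, one_mul]
      · intro r
        simp only
        rw [← mul_assoc, rr_mul d₂ d₁, one_mul]
    · intro t
      have e1 : suspFlow (subshiftGen d₁.x) t (Quot.mk _ (⟨u, hu⟩, s))
          = Quot.mk _ (⟨u, hu⟩, s + t) := rfl
      rw [e1, hbar_mk, Hmap_w d₁ d₂ hu j hj (s + t), hbar_mk, Hmap_w d₁ d₂ hu j hj s]
      have e2 : suspFlow (subshiftGen d₂.x) (rr d₁ d₂ * t)
          (Quot.mk _ (⟨d₂.w, d₂.w_mem⟩, rr d₁ d₂ * ((j:ℝ) + s)))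
          = Quot.mk _ (⟨d₂.w, d₂.w_mem⟩, rr d₁ d₂ * ((j:ℝ) + s) + rr d₁ d₂ * t) := rfl
      rw [e2, show rr d₁ d₂ * ((j:ℝ) + s) + rr d₁ d₂ * t = rr d₁ d₂ * ((j:ℝ) + (s + t)) by ring]

/-- integer-multiple periodicity from one-period periodicity. -/
lemma periodic_int_aux {A : Type*} {w : ℤ → A} {P : ℕ}
    (hper : ∀ a : ℤ, w (a + (P:ℤ)) = w a) (m : ℤ) (hm : (P:ℤ) ∣ m) (a : ℤ) :
    w (a + m) = w a := by
  have hnat : ∀ (q : ℕ) (b : ℤ), w (b + (P * q : ℕ)) = w b := by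
    intro q
    induction q with
    | zero => simp
    | succ q ih =>
        intro b
        have h1 := hper (b + (P * q : ℕ))
        rw [show b + ((P * (q+1) : ℕ) : ℤ) = b + (P * q : ℕ) + P by push_cast; ring]
        rw [h1, ih]
  obtain ⟨q, rfl⟩ := hm
  rcases le_or_gt 0 q with hq | hq
  · obtain ⟨q', rfl⟩ : ∃ q' : ℕ, q = (q' : ℤ) := ⟨q.toNat, by omega⟩
    have := hnat q' a
    rw [show a + (P:ℤ) * q' = a + ((P * q' : ℕ) : ℤ) by push_cast; ring]
    exact this
  · obtain ⟨q', hq'⟩ : ∃ q' : ℕ, q = -(q' : ℤ) := ⟨(-q).toNat, by omega⟩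
    subst hq'
    have := hnat q' (a + (P:ℤ) * (-(q':ℤ)))
    rw [show a + (P:ℤ) * (-(q':ℤ)) + ((P * q' : ℕ) : ℤ) = a by push_cast; ring] at this
    exact this.symm

lemma exists_epdata {x : ℤ → A} (hx : EventuallyPeriodic x) : ∃ d : EPData A, d.x = x := by
  obtain ⟨hnp, i, n, hn, hperiodic⟩ := hx
  obtain ⟨N, hN0, hNper⟩ := hperiodic
  set w := removeBlock x i n with hw
  have hex : ∃ P : ℕ, 0 < P ∧ ∀ a : ℤ, w (a + P) = w a := ⟨N, hN0, hNper⟩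
  classical
  set P := Nat.find hex with hPdef
  obtain ⟨hP0, hPper⟩ := Nat.find_spec hex
  have hleast : ∀ dz : ℤ, (∀ a, w (a + dz) = w a) → (P:ℤ) ∣ dz := by
    intro dz hdz
    have hPpos : (0:ℤ) < (P:ℤ) := mod_cast hP0
    set m := dz % P with hm
    have hm0 : 0 ≤ m := Int.emod_nonneg _ (by positivity)
    have hm1 : m < P := Int.emod_lt_of_pos _ hPpos
    have hmd : (P:ℤ) ∣ (dz - m) := Int.dvd_self_sub_of_emod_eq rfl
    by_cases hz : m = 0
    · omega
    · exfalso
      have hmper : ∀ a : ℤ, w (a + m) = w a := by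
        intro a
        have e1 : w (a + m) = w (a + m + (dz - m)) :=
          (periodic_int_aux hPper _ hmd _).symm
        rw [e1, show a + m + (dz - m) = a + dz by ring, hdz]
      have : m.toNat < P := by omega
      exact Nat.find_min hex this ⟨by omega, fun a => by
        have h9 := hmper a
        rw [show ((m.toNat : ℕ) : ℤ) = m from by omega]
        exact h9⟩
  refine ⟨⟨x, w, i, n, P, hn, hP0, hPper, hleast, ?_, ?_, hnp⟩, rfl⟩
  · intro a ha
    rw [hw]
    unfold removeBlock
    rw [if_pos ha]
  · intro a ha
    rw [hw]
    unfold removeBlock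
    rw [if_neg (by omega)]
    congr 1
    omega

end Assemble

/-- The subshifts generated by any two eventually periodic sequences are
flow equivalent. -/
theorem stmt_5 {A B : Type*} [Fintype A] [Fintype B]
    [TopologicalSpace A] [DiscreteTopology A] [TopologicalSpace B] [DiscreteTopology B]
    (x : ℤ → A) (y : ℤ → B) (hx : EventuallyPeriodic x) (hy : EventuallyPeriodic y) :
    FlowEquiv (subshiftGen x) (subshiftGen y) := by
  obtain ⟨d₁, rfl⟩ := exists_epdata hx
  obtain ⟨d₂, rfl⟩ := exists_epdata hy
  exact ⟨suspHomeo d₁ d₂, flow_compat d₁ d₂⟩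
end

section
/- Let p and q be relatively prime positive integers, let (a,b) be the restricted Bézout coefficients of (q,p), and let z_n be the cell lengths used to define S(0,q/p). Then z_0 + z_1 + ⋯ + z_{b−1} = a; equivalently, the chain of cells B_0⋯B_{b−1} of S(0,q/p) consists of exactly a+b symbols, of which exactly a are 0's. -/
open Classical

lemma aux_sum_cellLenS (p q : ℤ) (hp : 0 < p) (hq : 0 < q)
    (a b : ℤ) (ha : 0 ≤ a) (hb : 0 < b)
    (hab : b * q - a * p = 1) :
    (∑ j ∈ Finset.Ico (0 : ℤ) b, (cellLenS p q j : ℤ)) = a := by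
  have hq' : (0:ℚ) < (q:ℚ) := by exact_mod_cast hq
  set s : ℤ → Finset ℤ :=
    fun j => (Finset.Ioc 0 a).filter (fun k => j*q ≤ k*p ∧ k*p < (j+1)*q) with hs
  have hmem : ∀ k : ℤ, 0 < k*p → k*p < b*q → k ∈ Finset.Ioc 0 a := by
    intro k h1 h2
    rw [Finset.mem_Ioc]
    constructor
    · by_contra h
      push_neg at h
      nlinarith
    · have hkp : k*p ≤ a*p := by omega
      exact le_of_mul_le_mul_right hkp hp
  have hcell : ∀ j ∈ Finset.Ico (0:ℤ) b, (cellLenS p q j : ℤ) = ((s j).card : ℤ) := by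
    intro j hj
    rw [Finset.mem_Ico] at hj
    have hjq : ∀ k : ℤ, (k:ℚ) * ((p:ℚ)/(q:ℚ)) = ((k*p : ℤ):ℚ) / (q:ℚ) := by
      intro k; push_cast; ring
    congr 1
    rcases eq_or_lt_of_le hj.1 with h0 | h0
    · -- j = 0
      subst h0
      have hset : {k : ℤ | 0 < (k:ℚ)*((p:ℚ)/(q:ℚ)) ∧ (k:ℚ)*((p:ℚ)/(q:ℚ)) < 1}
          = ↑(s 0) := by
        ext k
        simp only [Set.mem_setOf_eq, hs, Finset.coe_filter, Finset.mem_Ioc, hjq k,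
          Set.mem_setOf_eq]
        rw [div_lt_one hq', lt_div_iff₀ hq', zero_mul]
        constructor
        · rintro ⟨h1, h2⟩
          have h1' : 0 < k*p := by exact_mod_cast h1
          have h2' : k*p < q := by exact_mod_cast h2
          have hm := Finset.mem_Ioc.mp (hmem k h1' (by nlinarith))
          exact ⟨hm, by omega, by omega⟩
        · rintro ⟨h1, _, h3⟩
          have h1' : 0 < k*p := mul_pos h1.1 hp
          refine ⟨by exact_mod_cast h1', by exact_mod_cast (by omega : k*p < q)⟩
      unfold cellLenS
      rw [if_neg (by omega), if_pos rfl, hset, Set.ncard_coe_finset]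
    · -- j ≥ 1
      have hj1 : 1 ≤ j := h0
      have hset : {k : ℤ | (j:ℚ) ≤ (k:ℚ)*((p:ℚ)/(q:ℚ)) ∧ (k:ℚ)*((p:ℚ)/(q:ℚ)) < (j:ℚ)+1}
          = ↑(s j) := by
        ext k
        simp only [Set.mem_setOf_eq, hs, Finset.coe_filter, Finset.mem_Ioc, hjq k,
          Set.mem_setOf_eq]
        rw [le_div_iff₀ hq', div_lt_iff₀ hq']
        have cast1 : ((j:ℚ) * (q:ℚ) ≤ ((k*p:ℤ):ℚ)) ↔ j*q ≤ k*p := by exact_mod_cast Iff.rfl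
        have cast2 : (((k*p:ℤ):ℚ) < ((j:ℚ)+1) * (q:ℚ)) ↔ k*p < (j+1)*q := by
          push_cast; exact_mod_cast Iff.rfl
        rw [cast1, cast2]
        constructor
        · rintro ⟨h1, h2⟩
          have hkp : 0 < k*p := lt_of_lt_of_le (by positivity) h1
          have hbq : k*p < b*q := lt_of_lt_of_le h2
            (mul_le_mul_of_nonneg_right (by omega) hq.le)
          exact ⟨Finset.mem_Ioc.mp (hmem k hkp hbq), h1, h2⟩
        · rintro ⟨_, h1, h2⟩
          exact ⟨h1, h2⟩
      unfold cellLenS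
      rw [if_neg (by omega), if_neg (by omega), hset, Set.ncard_coe_finset]
  have key : ∀ k ∈ Finset.Ioc (0:ℤ) a,
      (Finset.Ico (0:ℤ) b).filter (fun j => j*q ≤ k*p ∧ k*p < (j+1)*q) = {k*p / q} := by
    intro k hk
    rw [Finset.mem_Ioc] at hk
    have hkp : 0 < k*p := mul_pos hk.1 hp
    have hkpa : k*p ≤ a*p := mul_le_mul_of_nonneg_right hk.2 hp.le
    set j0 := k*p / q with hj0
    have hdm : q * j0 + k*p % q = k*p := Int.mul_ediv_add_emod _ _
    have hr1 : 0 ≤ k*p % q := Int.emod_nonneg _ hq.ne'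
    have hr2 : k*p % q < q := Int.emod_lt_of_pos _ hq
    have hlow : j0*q ≤ k*p := by linarith [hdm, hr1, (mul_comm q j0)] <;> nlinarith
    have hhigh : k*p < (j0+1)*q := by nlinarith
    have hj0nn : 0 ≤ j0 := Int.ediv_nonneg hkp.le hq.le
    have hj0b : j0 < b := by
      by_contra h
      push_neg at h
      have : b*q ≤ j0*q := mul_le_mul_of_nonneg_right h hq.le
      omega
    apply Finset.eq_singleton_iff_unique_mem.mpr
    constructor
    · rw [Finset.mem_filter, Finset.mem_Ico]
      exact ⟨⟨hj0nn, hj0b⟩, hlow, hhigh⟩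
    · intro j hjmem
      rw [Finset.mem_filter, Finset.mem_Ico] at hjmem
      obtain ⟨⟨_, _⟩, hja, hjb⟩ := hjmem
      have e1 : j*q < (j0+1)*q := lt_of_le_of_lt hja hhigh
      have e2 : j0*q < (j+1)*q := lt_of_le_of_lt hlow hjb
      have f1 : j < j0 + 1 := lt_of_mul_lt_mul_right e1 hq.le
      have f2 : j0 < j + 1 := lt_of_mul_lt_mul_right e2 hq.le
      omega
  have hsum : ∑ j ∈ Finset.Ico (0:ℤ) b, (s j).card = a.toNat := by
    have step1 : ∀ j ∈ Finset.Ico (0:ℤ) b, (s j).card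
        = ∑ k ∈ Finset.Ioc (0:ℤ) a, if j*q ≤ k*p ∧ k*p < (j+1)*q then 1 else 0 := by
      intro j _
      rw [hs]
      exact Finset.card_filter _ _
    rw [Finset.sum_congr rfl step1, Finset.sum_comm]
    have step2 : ∀ k ∈ Finset.Ioc (0:ℤ) a,
        (∑ j ∈ Finset.Ico (0:ℤ) b, if j*q ≤ k*p ∧ k*p < (j+1)*q then 1 else 0) = 1 := by
      intro k hk
      rw [← Finset.card_filter, key k hk, Finset.card_singleton]
    rw [Finset.sum_congr rfl step2, Finset.sum_const, smul_eq_mul, mul_one,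
      Int.card_Ioc]
    simp
  rw [Finset.sum_congr rfl hcell, ← Nat.cast_sum, hsum, Int.toNat_of_nonneg ha]

/-- With `(a,b)` the restricted Bézout coefficients of `(q,p)`, the cell
lengths of `S(0,q/p)` satisfy `z_0 + ⋯ + z_{b-1} = a`; equivalently, the chain
`B_0 ⋯ B_{b-1}` consists of `a + b` symbols (its `1`s start at positions `L_0 = 0` and
the next cell starts at `L_b = a + b`), of which exactly `a` are `0`s. -/
theorem stmt_10 (p q : ℤ) (hp : 0 < p) (hq : 0 < q) (hpq : IsCoprime p q)
    (a b : ℤ) (ha : 0 ≤ a) (ha' : a < q) (hb : 0 < b) (hb' : b ≤ p)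
    (hab : b * q - a * p = 1) :
    (∑ j ∈ Finset.Ico (0 : ℤ) b, (cellLenS p q j : ℤ)) = a ∧
      cellStart (cellLenS p q) b = a + b := by
  have hsum := aux_sum_cellLenS p q hp hq a b ha hb hab
  refine ⟨hsum, ?_⟩
  unfold cellStart
  rw [if_pos hb.le, hsum]
  ring
end

section
/- Let p and q be relatively prime positive integers and let (a,b) be the restricted Bézout coefficients of (q,p). Then for every integer r with −p ≤ r ≤ −1, the map k ↦ k + q + a is a bijection from the set {k ∈ ℤ : r < k·(p/q) ≤ r+1} onto the set {k ∈ ℤ : r+p+b ≤ k·(p/q) < r+p+b+1}. -/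
open Classical

/-- With `(a,b)` the restricted Bézout coefficients of `(q,p)` and
`-p ≤ r ≤ -1`, the map `k ↦ k + q + a` is a bijection from
`{k : r < k·(p/q) ≤ r+1}` onto `{k : r+p+b ≤ k·(p/q) < r+p+b+1}`. -/
theorem stmt_11 (p q : ℤ) (hp : 0 < p) (hq : 0 < q) (hpq : IsCoprime p q)
    (a b : ℤ) (ha : 0 ≤ a) (ha' : a < q) (hb : 0 < b) (hb' : b ≤ p)
    (hab : b * q - a * p = 1) (r : ℤ) (hr : -p ≤ r) (hr' : r ≤ -1) :
    Set.BijOn (fun k : ℤ => k + q + a)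
      {k : ℤ | (r : ℚ) < (k : ℚ) * ((p : ℚ) / (q : ℚ)) ∧
        (k : ℚ) * ((p : ℚ) / (q : ℚ)) ≤ (r : ℚ) + 1}
      {k : ℤ | (r : ℚ) + (p : ℚ) + (b : ℚ) ≤ (k : ℚ) * ((p : ℚ) / (q : ℚ)) ∧
        (k : ℚ) * ((p : ℚ) / (q : ℚ)) < (r : ℚ) + (p : ℚ) + (b : ℚ) + 1} := by
  have hq0 : (0:ℚ) < (q:ℚ) := by exact_mod_cast hq
  have key : ∀ x y : ℤ, (x:ℚ) < (y:ℚ) * ((p:ℚ)/(q:ℚ)) ↔ x * q < y * p := by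
    intro x y
    rw [mul_div_assoc', lt_div_iff₀ hq0]
    constructor <;> intro h <;> exact_mod_cast h
  have key2 : ∀ x y : ℤ, (y:ℚ) * ((p:ℚ)/(q:ℚ)) ≤ (x:ℚ) ↔ y * p ≤ x * q := by
    intro x y
    rw [mul_div_assoc', div_le_iff₀ hq0]
    constructor <;> intro h <;> exact_mod_cast h
  have key3 : ∀ x y : ℤ, (x:ℚ) ≤ (y:ℚ) * ((p:ℚ)/(q:ℚ)) ↔ x * q ≤ y * p := by
    intro x y
    rw [mul_div_assoc', le_div_iff₀ hq0]
    constructor <;> intro h <;> exact_mod_cast h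
  have key4 : ∀ x y : ℤ, (y:ℚ) * ((p:ℚ)/(q:ℚ)) < (x:ℚ) ↔ y * p < x * q := by
    intro x y
    rw [mul_div_assoc', div_lt_iff₀ hq0]
    constructor <;> intro h <;> exact_mod_cast h
  refine ⟨?_, ?_, ?_⟩
  · rintro k ⟨h1, h2⟩
    have hc1 : r * q < k * p := (key r k).mp h1
    have hc1' : r * q + 1 ≤ k * p := hc1
    have hc2 : k * p ≤ (r + 1) * q := by
      refine (key2 (r+1) k).mp ?_
      push_cast
      linarith
    constructor
    · have : ((r + p + b : ℤ):ℚ) ≤ ((k + q + a : ℤ):ℚ) * ((p:ℚ)/(q:ℚ)) :=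
        (key3 (r+p+b) (k+q+a)).mpr (by nlinarith)
      push_cast at this ⊢
      linarith
    · have : ((k + q + a : ℤ):ℚ) * ((p:ℚ)/(q:ℚ)) < ((r + p + b + 1 : ℤ):ℚ) :=
        (key4 (r+p+b+1) (k+q+a)).mpr (by nlinarith)
      push_cast at this ⊢
      linarith
  · intro k _ m _ h
    simpa using h
  · rintro m ⟨h1, h2⟩
    refine ⟨m - q - a, ?_, by show m - q - a + q + a = m; ring⟩
    have hc1 : (r + p + b) * q ≤ m * p :=
      (key3 (r+p+b) m).mp (by push_cast; linarith)
    have hc2 : m * p < (r + p + b + 1) * q :=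
      (key4 (r+p+b+1) m).mp (by push_cast; linarith)
    have hc2' : m * p + 1 ≤ (r + p + b + 1) * q := hc2
    constructor
    · have : ((r : ℤ):ℚ) < ((m - q - a : ℤ):ℚ) * ((p:ℚ)/(q:ℚ)) :=
        (key r (m-q-a)).mpr (by nlinarith)
      push_cast at this ⊢
      linarith
    · have : ((m - q - a : ℤ):ℚ) * ((p:ℚ)/(q:ℚ)) ≤ ((r + 1 : ℤ):ℚ) :=
        (key2 (r+1) (m-q-a)).mpr (by nlinarith)
      push_cast at this ⊢
      linarith
end

section
/- Let p and q be relatively prime positive integers and let (a,b) be the restricted Bézout coefficients of (q,p). Then the sequence S(0,q/p) ∈ {0,1}^ℤ is eventually periodic, its least period is p+q, and its anomaly size is a(S(0,q/p)) = a+b. -/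
open Classical

/-- Beatty enumeration `g m = ⌊m(p+q)/p⌋`. -/
def st12g (p q m : ℤ) : ℤ := m * (p + q) / p

/-- Counting function `c k = ⌊((k+1)p-1)/(p+q)⌋`. -/
def st12c (p q k : ℤ) : ℤ := ((k + 1) * p - 1) / (p + q)

noncomputable def st12y (p q : ℤ) (k : ℤ) : Fin 2 :=
  if ∃ m : ℤ, k = st12g p q m then 1 else 0

lemma st12g_eq (p q : ℤ) (hp : 0 < p) (m : ℤ) : st12g p q m = m + m * q / p := by
  unfold st12g
  have h : m * (p + q) = m * q + m * p := by ring
  rw [h, Int.add_mul_ediv_right _ _ (by omega : p ≠ 0)]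
  omega

lemma st12g_le_iff (p q : ℤ) (hp : 0 < p) (hq : 0 < q) (m k : ℤ) :
    st12g p q m ≤ k ↔ m ≤ st12c p q k := by
  have hP : (0:ℤ) < p + q := by omega
  have h1 : st12g p q m ≤ k ↔ m * (p + q) < (k + 1) * p := by
    rw [← Int.lt_add_one_iff, st12g, Int.ediv_lt_iff_lt_mul hp]
  have h2 : m ≤ st12c p q k ↔ m * (p + q) ≤ (k + 1) * p - 1 :=
    Int.le_ediv_iff_mul_le hP
  rw [h1, h2]; omega

lemma st12g_strictMono (p q : ℤ) (hp : 0 < p) (hq : 0 < q) : StrictMono (st12g p q) := by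
  apply strictMono_int_of_lt_succ
  intro m
  have h1 : (m * (p + q) + 1 * p) / p ≤ ((m + 1) * (p + q)) / p :=
    Int.ediv_le_ediv hp (by nlinarith)
  have h2 : (m * (p + q) + 1 * p) / p = m * (p + q) / p + 1 :=
    Int.add_mul_ediv_right _ _ (by omega : p ≠ 0)
  unfold st12g
  omega

lemma st12g_add_mul (p q : ℤ) (hp : 0 < p) (m j : ℤ) :
    st12g p q (m + j * p) = st12g p q m + j * (p + q) := by
  unfold st12g
  have h : (m + j * p) * (p + q) = m * (p + q) + (j * (p + q)) * p := by ring
  rw [h, Int.add_mul_ediv_right _ _ (by omega : p ≠ 0)]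

lemma st12g_zero (p q : ℤ) : st12g p q 0 = 0 := by unfold st12g; simp

lemma st12mem_iff (p q : ℤ) (hp : 0 < p) (hq : 0 < q) (k : ℤ) :
    (∃ m, k = st12g p q m) ↔ st12g p q (st12c p q k) = k := by
  constructor
  · rintro ⟨m, rfl⟩
    have h1 : m ≤ st12c p q (st12g p q m) := (st12g_le_iff p q hp hq m _).1 le_rfl
    have h2 : ¬ (m + 1 ≤ st12c p q (st12g p q m)) := by
      intro h
      have h3 := (st12g_le_iff p q hp hq (m+1) (st12g p q m)).2 h
      exact absurd h3 (not_le.2 (st12g_strictMono p q hp hq (by omega : m < m + 1)))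
    have h4 : st12c p q (st12g p q m) = m := by omega
    rw [h4]
  · intro h; exact ⟨_, h.symm⟩

lemma st12ind (p q : ℤ) (hp : 0 < p) (hq : 0 < q) (k : ℤ) :
    (∃ m, k = st12g p q m) ↔ st12c p q (k - 1) < st12c p q k := by
  constructor
  · intro h
    have hg := (st12mem_iff p q hp hq k).1 h
    by_contra hle
    push_neg at hle
    have h1 : st12g p q (st12c p q k) ≤ k - 1 := (st12g_le_iff p q hp hq _ _).2 hle
    omega
  · intro hlt
    have h1 : st12g p q (st12c p q (k - 1) + 1) ≤ k :=
      (st12g_le_iff p q hp hq _ _).2 (by omega)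
    have h2 : ¬ st12g p q (st12c p q (k - 1) + 1) ≤ k - 1 := by
      intro h
      have h3 := (st12g_le_iff p q hp hq (st12c p q (k-1) + 1) (k-1)).1 h
      omega
    exact ⟨st12c p q (k - 1) + 1, by omega⟩

lemma st12c_mono (p q : ℤ) (hp : 0 < p) (hq : 0 < q) {k k' : ℤ} (h : k ≤ k') :
    st12c p q k ≤ st12c p q k' := by
  apply Int.ediv_le_ediv (by omega : (0:ℤ) < p + q)
  nlinarith

lemma st12c_step (p q : ℤ) (hp : 0 < p) (hq : 0 < q) (k : ℤ) :
    st12c p q k ≤ st12c p q (k - 1) + 1 := by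
  have h2 : ((k - 1 + 1) * p - 1 + 1 * (p + q)) / (p + q) = st12c p q (k - 1) + 1 :=
    Int.add_mul_ediv_right _ _ (by omega : p + q ≠ 0)
  have h1 : ((k + 1) * p - 1) / (p + q) ≤ ((k - 1 + 1) * p - 1 + 1 * (p + q)) / (p + q) :=
    Int.ediv_le_ediv (by omega) (by nlinarith)
  unfold st12c at *
  omega

lemma st12rigid (p q : ℤ) (hp : 0 < p) (hq : 0 < q) {a b : ℤ} (hab : b * q - a * p = 1)
    (d : ℤ)
    (hinv : ∀ k, (∃ m, k = st12g p q m) ↔ (∃ m, k + d = st12g p q m)) :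
    (p + q) ∣ d := by
  have hdiff : ∀ k, st12c p q (k + d) - st12c p q (k + d - 1)
      = st12c p q k - st12c p q (k - 1) := by
    intro k
    have h1 := st12c_mono p q hp hq (by omega : k - 1 ≤ k)
    have h2 := st12c_step p q hp hq k
    have h3 := st12c_mono p q hp hq (by omega : k + d - 1 ≤ k + d)
    have h4 := st12c_step p q hp hq (k + d)
    have hiff : (st12c p q (k-1) < st12c p q k) ↔
        (st12c p q (k+d-1) < st12c p q (k+d)) := by
      rw [← st12ind p q hp hq, ← st12ind p q hp hq]; exact hinv k
    omega
  have hconst : ∀ k : ℤ, st12c p q (k + d) - st12c p q k = st12c p q d - st12c p q 0 := by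
    intro k
    induction k using Int.induction_on with
    | zero => simp
    | succ i ih =>
      have h := hdiff ((i:ℤ) + 1)
      have e1 : (i:ℤ) + 1 + d - 1 = i + d := by ring
      have e2 : (i:ℤ) + 1 - 1 = i := by ring
      rw [e1, e2] at h
      omega
    | pred i ih =>
      have h := hdiff (-(i:ℤ))
      have e1 : -(i:ℤ) + d - 1 = -(i:ℤ) - 1 + d := by ring
      rw [e1] at h
      omega
  have hiter : ∀ t : ℕ, st12c p q (t * d)
      = st12c p q 0 + t * (st12c p q d - st12c p q 0) := by
    intro t
    induction t with
    | zero => simp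
    | succ t ih =>
      have h := hconst ((t:ℤ) * d)
      have e1 : (((t:ℕ)+1 : ℕ) : ℤ) * d = ((t:ℤ) * d + d) := by push_cast; ring
      rw [e1]
      have e2 : (((t:ℕ)+1 : ℕ) : ℤ) * (st12c p q d - st12c p q 0)
          = (t:ℤ) * (st12c p q d - st12c p q 0) + (st12c p q d - st12c p q 0) := by
        push_cast; ring
      rw [e2]
      omega
  have hper : st12c p q (d * (p + q)) = st12c p q 0 + d * p := by
    unfold st12c
    have h : (d * (p + q) + 1) * p - 1 = ((0 + 1) * p - 1) + (d * p) * (p + q) := by ring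
    rw [h, Int.add_mul_ediv_right _ _ (by omega : p + q ≠ 0)]
  have hPt : (((p + q).toNat : ℤ)) = p + q := Int.toNat_of_nonneg (by omega)
  have h1 := hiter (p + q).toNat
  rw [hPt] at h1
  have h2 : (p + q) * d = d * (p + q) := by ring
  rw [h2, hper] at h1
  have hcp : IsCoprime (p + q) p := ⟨b, -(a + b), by linear_combination hab⟩
  exact hcp.dvd_of_dvd_mul_right ⟨st12c p q d - st12c p q 0, by linarith⟩

lemma st12ite_iff {A B : Prop} [Decidable A] [Decidable B]
    (h : (if A then (1 : Fin 2) else 0) = if B then 1 else 0) : A ↔ B := by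
  by_cases hA : A <;> by_cases hB : B <;> simp [hA, hB] at h ⊢ <;> exact absurd h (by decide)

lemma st12y_per (p q : ℤ) (hp : 0 < p) (j k : ℤ) :
    st12y p q (k + j * (p + q)) = st12y p q k := by
  unfold st12y
  refine if_congr ?_ rfl rfl
  constructor
  · rintro ⟨m, hm⟩
    refine ⟨m - j * p, ?_⟩
    have h := st12g_add_mul p q hp (m - j * p) j
    have e : m - j * p + j * p = m := by ring
    rw [e] at h
    omega
  · rintro ⟨m, hm⟩
    refine ⟨m + j * p, ?_⟩
    rw [st12g_add_mul p q hp m j]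
    omega

lemma st12y_rigid (p q : ℤ) (hp : 0 < p) (hq : 0 < q) {a b : ℤ} (hab : b * q - a * p = 1)
    (d : ℤ) (h : ∀ k, st12y p q k = st12y p q (k + d)) : (p + q) ∣ d :=
  st12rigid p q hp hq hab d fun k => st12ite_iff (h k)

lemma st12y_ext_left (p q : ℤ) (hp : 0 < p) (hq : 0 < q) (K d : ℤ)
    (h : ∀ k ≤ K, st12y p q k = st12y p q (k + d)) :
    ∀ k, st12y p q k = st12y p q (k + d) := by
  intro k
  set j : ℤ := max (k - K) 0 with hj
  have hj0 : 0 ≤ j := le_max_right _ _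
  have hjk : k - K ≤ j := le_max_left _ _
  have hjm : j ≤ j * (p + q) := le_mul_of_one_le_right hj0 (by omega)
  have h1 : k - j * (p + q) ≤ K := by omega
  have e1 : st12y p q k = st12y p q (k - j * (p + q)) := by
    have h2 := st12y_per p q hp j (k - j * (p + q))
    have e : k - j * (p + q) + j * (p + q) = k := by ring
    rw [e] at h2
    exact h2
  have e2 : st12y p q (k - j * (p + q) + d) = st12y p q (k + d) := by
    have h2 := st12y_per p q hp j (k - j * (p + q) + d)
    have e : k - j * (p + q) + d + j * (p + q) = k + d := by ring
    rw [e] at h2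
    exact h2.symm
  rw [e1, h _ h1, e2]

lemma st12y_ext_right (p q : ℤ) (hp : 0 < p) (hq : 0 < q) (K d : ℤ)
    (h : ∀ k, K ≤ k → st12y p q k = st12y p q (k + d)) :
    ∀ k, st12y p q k = st12y p q (k + d) := by
  intro k
  set j : ℤ := max (K - k) 0 with hj
  have hj0 : 0 ≤ j := le_max_right _ _
  have hjk : K - k ≤ j := le_max_left _ _
  have hjm : j ≤ j * (p + q) := le_mul_of_one_le_right hj0 (by omega)
  have h1 : K ≤ k + j * (p + q) := by omega
  have e1 : st12y p q k = st12y p q (k + j * (p + q)) :=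
    (st12y_per p q hp j k).symm
  have e2 : st12y p q (k + j * (p + q) + d) = st12y p q (k + d) := by
    have h2 := st12y_per p q hp j (k + d)
    have e : k + d + j * (p + q) = k + j * (p + q) + d := by ring
    rw [e] at h2
    exact h2
  rw [e1, h _ h1, e2]

/-- `hh n`: the running offset. -/
def st12hh (p q n : ℤ) : ℤ := if n ≤ 0 then n * q / p else (n * q - 1) / p

lemma st12_setIoc (A B : ℤ) (S : Set ℤ) (h : ∀ k, k ∈ S ↔ (A < k ∧ k ≤ B)) :
    S.ncard = (B - A).toNat := by
  have hS : S = ↑(Finset.Ioc A B) := Set.ext fun k => by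
    simpa [Finset.mem_Ioc] using h k
  rw [hS, Set.ncard_coe_finset, Int.card_Ioc]

lemma st12_rat_lt (p q c k : ℤ) (hq : 0 < q) :
    ((c : ℚ) < (k : ℚ) * ((p : ℚ) / (q : ℚ))) ↔ c * q < k * p := by
  have hq' : (0 : ℚ) < (q : ℚ) := by exact_mod_cast hq
  rw [← mul_div_assoc, lt_div_iff₀ hq']
  exact_mod_cast Iff.rfl

lemma st12_rat_le (p q c k : ℤ) (hq : 0 < q) :
    ((c : ℚ) ≤ (k : ℚ) * ((p : ℚ) / (q : ℚ))) ↔ c * q ≤ k * p := by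
  have hq' : (0 : ℚ) < (q : ℚ) := by exact_mod_cast hq
  rw [← mul_div_assoc, le_div_iff₀ hq']
  exact_mod_cast Iff.rfl

lemma st12_rat_lt' (p q c k : ℤ) (hq : 0 < q) :
    ((k : ℚ) * ((p : ℚ) / (q : ℚ)) < (c : ℚ)) ↔ k * p < c * q := by
  have hq' : (0 : ℚ) < (q : ℚ) := by exact_mod_cast hq
  rw [← mul_div_assoc, div_lt_iff₀ hq']
  exact_mod_cast Iff.rfl

lemma st12_rat_le' (p q c k : ℤ) (hq : 0 < q) :
    ((k : ℚ) * ((p : ℚ) / (q : ℚ)) ≤ (c : ℚ)) ↔ k * p ≤ c * q := by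
  have hq' : (0 : ℚ) < (q : ℚ) := by exact_mod_cast hq
  rw [← mul_div_assoc, div_le_iff₀ hq']
  exact_mod_cast Iff.rfl

lemma st12hh_zero (p q : ℤ) : st12hh p q 0 = 0 := by simp [st12hh]

lemma st12hh_step (p q : ℤ) (hp : 0 < p) (hq : 0 < q) (n : ℤ) :
    st12hh p q n ≤ st12hh p q (n + 1) := by
  unfold st12hh
  rcases lt_trichotomy n 0 with h | h | h
  · rw [if_pos (by omega : n ≤ 0)]
    by_cases h1 : n + 1 ≤ 0
    · rw [if_pos h1]
      exact Int.ediv_le_ediv hp (by nlinarith)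
    · have hn : n = -1+0 := by omega
      rw [if_neg h1]
      apply Int.ediv_le_ediv hp
      nlinarith
  · subst h
    simp only [le_refl, if_pos, Int.zero_mul, Int.zero_ediv]
    rw [if_neg (by omega : ¬ (0:ℤ) + 1 ≤ 0)]
    have : (0:ℤ) ≤ (0 + 1) * q - 1 := by omega
    exact Int.ediv_nonneg this (by omega)
  · rw [if_neg (by omega : ¬ n ≤ 0), if_neg (by omega : ¬ n + 1 ≤ 0)]
    exact Int.ediv_le_ediv hp (by nlinarith)

lemma st12cellLen (p q : ℤ) (hp : 0 < p) (hq : 0 < q) (n : ℤ) :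
    (cellLenS p q n : ℤ) = st12hh p q (n + 1) - st12hh p q n := by
  have hstep := st12hh_step p q hp hq n
  suffices h : cellLenS p q n = (st12hh p q (n + 1) - st12hh p q n).toNat by
    rw [h, Int.toNat_of_nonneg (by omega)]
  unfold cellLenS
  rcases lt_trichotomy n 0 with h | h | h
  · rw [if_pos h]
    have e : st12hh p q (n+1) - st12hh p q n = (n+1) * q / p - n * q / p := by
      unfold st12hh
      rw [if_pos (by omega : n ≤ 0), if_pos (by omega : n + 1 ≤ 0)]
    rw [e]
    apply st12_setIoc
    intro k
    simp only [Set.mem_setOf_eq]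
    rw [st12_rat_lt p q n k hq]
    have e2 : ((n:ℚ) + 1) = ((n + 1 : ℤ) : ℚ) := by push_cast; ring
    rw [e2, st12_rat_le' p q (n+1) k hq]
    constructor
    · rintro ⟨h1, h2⟩
      exact ⟨(Int.ediv_lt_iff_lt_mul hp).2 h1, (Int.le_ediv_iff_mul_le hp).2 h2⟩
    · rintro ⟨h1, h2⟩
      exact ⟨(Int.ediv_lt_iff_lt_mul hp).1 h1, (Int.le_ediv_iff_mul_le hp).1 h2⟩
  · subst h
    rw [if_neg (by omega), if_pos rfl]
    have e : st12hh p q (0+1) - st12hh p q 0 = ((0+1) * q - 1) / p - 0 := by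
      unfold st12hh
      rw [if_pos (by omega : (0:ℤ) ≤ 0), if_neg (by omega : ¬ (0:ℤ) + 1 ≤ 0)]
      simp
    rw [e]
    apply st12_setIoc 0 (((0+1) * q - 1) / p)
    intro k
    simp only [Set.mem_setOf_eq]
    rw [show ((0:ℚ)) = ((0:ℤ):ℚ) by norm_num, st12_rat_lt p q 0 k hq,
      show ((1:ℚ)) = ((1:ℤ):ℚ) by norm_num, st12_rat_lt' p q 1 k hq]
    constructor
    · rintro ⟨h1, h2⟩
      constructor
      · nlinarith
      · exact (Int.le_ediv_iff_mul_le hp).2 (by omega)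
    · rintro ⟨h1, h2⟩
      constructor
      · nlinarith
      · have := (Int.le_ediv_iff_mul_le hp).1 h2
        omega
  · rw [if_neg (by omega), if_neg (by omega)]
    have e : st12hh p q (n+1) - st12hh p q n = ((n+1) * q - 1) / p - (n * q - 1) / p := by
      unfold st12hh
      rw [if_neg (by omega : ¬ n ≤ 0), if_neg (by omega : ¬ n + 1 ≤ 0)]
    rw [e]
    apply st12_setIoc
    intro k
    simp only [Set.mem_setOf_eq]
    rw [st12_rat_le p q n k hq]
    have e2 : ((n:ℚ) + 1) = ((n + 1 : ℤ) : ℚ) := by push_cast; ring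
    rw [e2, st12_rat_lt' p q (n+1) k hq]
    constructor
    · rintro ⟨h1, h2⟩
      constructor
      · rw [Int.ediv_lt_iff_lt_mul hp]; omega
      · exact (Int.le_ediv_iff_mul_le hp).2 (by omega)
    · rintro ⟨h1, h2⟩
      constructor
      · have := (Int.ediv_lt_iff_lt_mul hp).1 h1; omega
      · have := (Int.le_ediv_iff_mul_le hp).1 h2; omega

lemma st12tele (f : ℤ → ℤ) : ∀ (m : ℕ) (t : ℤ),
    ∑ j ∈ Finset.Ico t (t + (m : ℤ)), (f (j + 1) - f j) = f (t + (m : ℤ)) - f t := by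
  intro m
  induction m with
  | zero => intro t; simp
  | succ m ih =>
    intro t
    have hcast : t + ((m + 1 : ℕ) : ℤ) = (t + (m:ℤ)) + 1 := by push_cast; ring
    rw [hcast]
    have hsplit : Finset.Ico t (t + (m:ℤ) + 1)
        = Finset.Ico t (t + (m:ℤ)) ∪ Finset.Ico (t + (m:ℤ)) (t + (m:ℤ) + 1) :=
      (Finset.Ico_union_Ico_eq_Ico (by omega) (by omega)).symm
    have hsing : Finset.Ico (t + (m:ℤ)) (t + (m:ℤ) + 1) = {t + (m:ℤ)} := by
      ext x; simp only [Finset.mem_Ico, Finset.mem_singleton]; omega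
    rw [hsplit, Finset.sum_union (by rw [hsing]; simp [Finset.mem_Ico]), hsing,
      Finset.sum_singleton, ih t]
    ring

lemma st12cellStart (p q : ℤ) (hp : 0 < p) (hq : 0 < q) (n : ℤ) :
    cellStart (cellLenS p q) n = n + st12hh p q n := by
  unfold cellStart
  by_cases h : 0 ≤ n
  · rw [if_pos h]
    have hsum : ∑ j ∈ Finset.Ico (0:ℤ) n, ((cellLenS p q j : ℤ))
        = ∑ j ∈ Finset.Ico (0:ℤ) n, (st12hh p q (j+1) - st12hh p q j) :=
      Finset.sum_congr rfl fun j _ => st12cellLen p q hp hq j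
    have htele := st12tele (st12hh p q) n.toNat 0
    rw [Int.toNat_of_nonneg h] at htele
    rw [hsum]
    rw [show (0:ℤ) + n = n from zero_add n] at htele
    rw [htele, st12hh_zero]
    ring
  · rw [if_neg h]
    have hsum : ∑ j ∈ Finset.Ico n (0:ℤ), ((cellLenS p q j : ℤ))
        = ∑ j ∈ Finset.Ico n (0:ℤ), (st12hh p q (j+1) - st12hh p q j) :=
      Finset.sum_congr rfl fun j _ => st12cellLen p q hp hq j
    have htele := st12tele (st12hh p q) (-n).toNat n
    rw [Int.toNat_of_nonneg (by omega : 0 ≤ -n)] at htele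
    rw [show n + -n = (0:ℤ) by ring] at htele
    rw [hsum, htele, st12hh_zero]
    ring

lemma st12negone (p : ℤ) (hp : 0 < p) : (-1 : ℤ) / p = -1 := by
  have h : (-1 : ℤ) = (p - 1) + (-1) * p := by ring
  conv_lhs => rw [h]
  rw [Int.add_mul_ediv_right _ _ (by omega : p ≠ 0),
    Int.ediv_eq_zero_of_lt (by omega) (by omega)]
  ring

lemma st12shift (p q a b : ℤ) (hp : 0 < p) (hq : 0 < q) (hab : b * q - a * p = 1)
    (n : ℤ) : st12g p q (n - b) + (a + b) = n + (n * q - 1) / p := by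
  rw [st12g_eq p q hp]
  have h1 : (n - b) * q = (n * q - 1) + (-a) * p := by linear_combination -hab
  rw [h1, Int.add_mul_ediv_right _ _ (by omega : p ≠ 0)]
  ring

section main
variable (p q a b : ℤ) (hp : 0 < p) (hq : 0 < q)
  (ha : 0 ≤ a) (ha' : a < q) (hb : 0 < b) (hb' : b ≤ p) (hab : b * q - a * p = 1)

include hp hq ha hb hab in
lemma st12sturm_eq (k : ℤ) :
    sturmS p q k = if k ≤ 0 then st12y p q k else st12y p q (k - (a + b)) := by
  have hmono := st12g_strictMono p q hp hq
  have hg0 := st12g_zero p q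
  have hF2 := st12shift p q a b hp hq hab
  have hF7 : 1 ≤ st12g p q (1 - b) + (a + b) := by
    rw [hF2 1]
    have : 0 ≤ (1 * q - 1) / p := Int.ediv_nonneg (by omega) (by omega)
    omega
  have hF8 : st12g p q (-b) + (a + b) = -1 := by
    have := hF2 0
    rw [show (0:ℤ) - b = -b by ring] at this
    rw [this, show (0:ℤ) * q - 1 = -1 by ring, st12negone p hp]
    ring
  have hhle : ∀ n : ℤ, n ≤ 0 → n + st12hh p q n = st12g p q n := by
    intro n hn
    rw [st12g_eq p q hp, st12hh, if_pos hn]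
  have hhgt : ∀ n : ℤ, 0 < n → n + st12hh p q n = st12g p q (n - b) + (a + b) := by
    intro n hn
    rw [hF2 n, st12hh, if_neg (by omega)]
  show (if ∃ n, k = cellStart (cellLenS p q) n then (1 : Fin 2) else 0) = _
  by_cases hk : k ≤ 0
  · rw [if_pos hk]
    show _ = (if ∃ m, k = st12g p q m then (1 : Fin 2) else 0)
    refine if_congr ?_ rfl rfl
    constructor
    · rintro ⟨n, hn⟩
      rw [st12cellStart p q hp hq] at hn
      by_cases hn0 : n ≤ 0
      · exact ⟨n, by rw [hn, hhle n hn0]⟩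
      · exfalso
        rw [hhgt n (by omega)] at hn
        have h1 : st12g p q (1 - b) ≤ st12g p q (n - b) :=
          hmono.monotone (by omega)
        omega
    · rintro ⟨m, hm⟩
      by_cases hm0 : m ≤ 0
      · exact ⟨m, by rw [st12cellStart p q hp hq, hhle m hm0, hm]⟩
      · exfalso
        have h1 : st12g p q 0 < st12g p q m := hmono (by omega)
        omega
  · rw [if_neg hk]
    show _ = (if ∃ m, k - (a + b) = st12g p q m then (1 : Fin 2) else 0)
    refine if_congr ?_ rfl rfl
    constructor
    · rintro ⟨n, hn⟩
      rw [st12cellStart p q hp hq] at hn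
      by_cases hn0 : n ≤ 0
      · exfalso
        rw [hhle n hn0] at hn
        have h1 : st12g p q n ≤ st12g p q 0 := hmono.monotone hn0
        omega
      · rw [hhgt n (by omega)] at hn
        exact ⟨n - b, by omega⟩
    · rintro ⟨m, hm⟩
      by_cases hm0 : 1 - b ≤ m
      · refine ⟨m + b, ?_⟩
        rw [st12cellStart p q hp hq, hhgt (m + b) (by omega),
          show m + b - b = m by ring]
        omega
      · exfalso
        have h1 : st12g p q m ≤ st12g p q (-b) := hmono.monotone (by omega)
        omega

omit hp hq ha ha' hb hb' hab in
lemma st12y_zero : st12y p q 0 = 1 := by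
  unfold st12y
  rw [if_pos ⟨0, (st12g_zero p q).symm⟩]

include hp hq ha hb hab in
lemma st12y_negs : st12y p q (-(a + b)) = 0 := by
  have hmono := st12g_strictMono p q hp hq
  have hF2 := st12shift p q a b hp hq hab
  have hF7 : 1 ≤ st12g p q (1 - b) + (a + b) := by
    rw [hF2 1]
    have : 0 ≤ (1 * q - 1) / p := Int.ediv_nonneg (by omega) (by omega)
    omega
  have hF8 : st12g p q (-b) + (a + b) = -1 := by
    have := hF2 0
    rw [show (0:ℤ) - b = -b by ring] at this
    rw [this, show (0:ℤ) * q - 1 = -1 by ring, st12negone p hp]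
    ring
  unfold st12y
  rw [if_neg]
  rintro ⟨m, hm⟩
  by_cases hm0 : 1 - b ≤ m
  · have h1 : st12g p q (1 - b) ≤ st12g p q m := hmono.monotone hm0
    omega
  · have h1 : st12g p q m ≤ st12g p q (-b) := hmono.monotone (by omega)
    omega

end main

lemma st12per_iter {A : Type*} {x : ℤ → A} {N : ℕ} (h : ∀ i : ℤ, x (i + N) = x i) :
    ∀ (t : ℕ) (i : ℤ), x (i + (t : ℤ) * (N : ℤ)) = x i := by
  intro t
  induction t with
  | zero => intro i; simp
  | succ t ih =>
    intro i
    have e : i + ((t:ℕ)+1 : ℕ) * (N:ℤ) = (i + (t:ℤ) * N) + N := by push_cast; ring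
    rw [e, h (i + (t:ℤ) * N), ih i]


/-- `S(0,q/p)` is eventually periodic with least period `p+q` and anomaly
size `a+b`, where `(a,b)` are the restricted Bézout coefficients of `(q,p)`. -/
theorem stmt_12 (p q : ℤ) (hp : 0 < p) (hq : 0 < q) (hpq : IsCoprime p q)
    (a b : ℤ) (ha : 0 ≤ a) (ha' : a < q) (hb : 0 < b) (hb' : b ≤ p)
    (hab : b * q - a * p = 1) :
    EventuallyPeriodic (sturmS p q) ∧ (evLeastPeriod (sturmS p q) : ℤ) = p + q ∧
      (anomalySize (sturmS p q) : ℤ) = a + b := by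
  set s : ℤ := a + b with hs
  have hs1 : 1 ≤ s := by omega
  have hs2 : s ≤ p + q - 1 := by omega
  have hP : (0:ℤ) < p + q := by omega
  have hx : ∀ k, sturmS p q k = if k ≤ 0 then st12y p q k else st12y p q (k - s) :=
    st12sturm_eq p q a b hp hq ha hb hab
  have hstoNat : ((s.toNat : ℤ)) = s := Int.toNat_of_nonneg (by omega)
  have hPtoNat : (((p+q).toNat : ℤ)) = p + q := Int.toNat_of_nonneg (by omega)
  -- the removed-block sequence at the canonical occurrence equals y
  have hremove : removeBlock (sturmS p q) 0 s.toNat = st12y p q := by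
    funext k
    unfold removeBlock
    by_cases hk : k ≤ 0
    · rw [if_pos hk, hx, if_pos hk]
    · rw [if_neg hk, hx, if_neg (by omega : ¬ k + (s.toNat : ℤ) ≤ 0)]
      rw [show k + (s.toNat : ℤ) - s = k by omega]
  have hyper : IsPeriodicWith (st12y p q) (p+q).toNat := by
    constructor
    · omega
    · intro i
      have h := st12y_per p q hp 1 i
      rw [show i + ((p+q).toNat : ℤ) = i + 1 * (p + q) by omega]
      exact h
  have hocc : IsAnomalyOcc (sturmS p q) 0 s.toNat :=
    ⟨by omega, ⟨(p+q).toNat, by rw [hremove]; exact hyper⟩⟩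
  -- key rigidity consequence for an arbitrary anomaly occurrence
  have key : ∀ (i : ℤ) (n N : ℕ), 0 < n → IsPeriodicWith (removeBlock (sturmS p q) i n) N →
      ((p+q) ∣ (N:ℤ) ∧ (p+q) ∣ ((n:ℤ) - s)) := by
    intro i n N hn hNper
    obtain ⟨hN0, hNp⟩ := hNper
    set r := removeBlock (sturmS p q) i n with hr
    have hN1 : 1 ≤ (N:ℤ) := by exact_mod_cast hN0
    have hr_right : ∀ k, max (i+1) 1 ≤ k → r k = st12y p q (k + n - s) := by
      intro k hk
      have hk1 : i + 1 ≤ k := le_trans (le_max_left _ _) hk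
      have hk2 : (1:ℤ) ≤ k := le_trans (le_max_right _ _) hk
      rw [hr]
      unfold removeBlock
      rw [if_neg (by omega), hx, if_neg (by omega : ¬ k + (n:ℤ) ≤ 0)]
    have h1 : ∀ j, max (i+1) 1 + (n:ℤ) - s ≤ j → st12y p q j = st12y p q (j + N) := by
      intro j hj
      set k := j - (n:ℤ) + s with hk
      have hk1 : max (i+1) 1 ≤ k := by omega
      have hk2 : max (i+1) 1 ≤ k + N := by omega
      have e1 : r k = st12y p q (k + n - s) := hr_right k hk1
      have e2 : r (k + N) = st12y p q (k + N + n - s) := hr_right (k + N) hk2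
      have e3 : r (k + N) = r k := hNp k
      rw [e1, e2] at e3
      rw [show j = k + (n:ℤ) - s by omega, show k + (n:ℤ) - s + N = k + N + (n:ℤ) - s by ring]
      exact e3.symm
    have h1' := st12y_ext_right p q hp hq _ _ h1
    have hdvdN : (p+q) ∣ (N:ℤ) := st12y_rigid p q hp hq hab _ h1'
    refine ⟨hdvdN, ?_⟩
    have hr_left : ∀ k, k ≤ min i 0 → r k = st12y p q k := by
      intro k hk
      rw [hr]
      unfold removeBlock
      rw [if_pos (by omega : k ≤ i), hx, if_pos (by omega : k ≤ 0)]
    have h2 : ∀ k ≤ min i 0, st12y p q k = st12y p q (k + ((n:ℤ) - s)) := by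
      intro k hk
      set t : ℕ := (max (i+1) 1 - k).toNat with ht
      have ht1 : (max (i+1) 1 - k) ≤ (t:ℤ) := Int.self_le_toNat _
      have ht0 : (0:ℤ) ≤ t := by positivity
      have ht2 : (t:ℤ) ≤ (t:ℤ) * N := le_mul_of_one_le_right ht0 hN1
      have hkt : max (i+1) 1 ≤ k + (t:ℤ) * N := by omega
      have e1 : r k = r (k + (t:ℤ) * N) := (st12per_iter hNp t k).symm
      have e2 : r (k + (t:ℤ) * N) = st12y p q (k + (t:ℤ) * N + n - s) :=
        hr_right _ hkt
      obtain ⟨c, hc⟩ := hdvdN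
      have e3 : st12y p q (k + (t:ℤ) * N + n - s) = st12y p q (k + n - s) := by
        have h4 := st12y_per p q hp ((t:ℤ) * c) (k + (n:ℤ) - s)
        rw [show k + (n:ℤ) - s + (t:ℤ) * c * (p + q) = k + (t:ℤ) * N + n - s by
          rw [hc]; ring] at h4
        exact h4
      have e4 := hr_left k hk
      rw [show k + ((n:ℤ) - s) = k + (n:ℤ) - s by ring]
      rw [← e4, e1, e2, e3]
    have h2' := st12y_ext_left p q hp hq _ _ h2
    exact st12y_rigid p q hp hq hab _ h2'
  -- non-periodicity
  have hnotper : ¬ IsPeriodicSeq (sturmS p q) := by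
    rintro ⟨N, hN0, hNp⟩
    have hN1 : 1 ≤ (N:ℤ) := by exact_mod_cast hN0
    have h1 : ∀ j, 1 - s ≤ j → st12y p q j = st12y p q (j + N) := by
      intro j hj
      set k := j + s with hk
      have hk1 : (1:ℤ) ≤ k := by omega
      have e1 : sturmS p q k = st12y p q (k - s) := by rw [hx, if_neg (by omega)]
      have e2 : sturmS p q (k + N) = st12y p q (k + N - s) := by
        rw [hx, if_neg (by omega)]
      have e3 := hNp k
      rw [e1, e2] at e3
      rw [show j = k - s by omega, show k - s + N = k + N - s by ring]
      exact e3.symm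
    have h1' := st12y_ext_right p q hp hq _ _ h1
    have hdvdN : (p+q) ∣ (N:ℤ) := st12y_rigid p q hp hq hab _ h1'
    have hNge : (p+q) ≤ (N:ℤ) := Int.le_of_dvd (by omega) hdvdN
    have e1 : sturmS p q 0 = st12y p q 0 := by rw [hx, if_pos le_rfl]
    have e2 : sturmS p q ((0:ℤ) + N) = st12y p q ((N:ℤ) - s) := by
      rw [hx, if_neg (by omega)]
      rw [show (0:ℤ) + N - s = (N:ℤ) - s by ring]
    obtain ⟨c, hc⟩ := hdvdN
    have e3 : st12y p q ((N:ℤ) - s) = st12y p q (-s) := by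
      have h4 := st12y_per p q hp c (-s)
      rw [show -s + c * (p + q) = (N:ℤ) - s by linear_combination -hc] at h4
      exact h4
    have e4 := hNp 0
    rw [e1, e2, e3, st12y_zero, st12y_negs p q a b hp hq ha hb hab] at e4
    exact absurd e4 (by decide)
  refine ⟨⟨hnotper, 0, s.toNat, hocc⟩, ?_, ?_⟩
  · -- evLeastPeriod
    have hmem : (p+q).toNat ∈
        {N : ℕ | ∃ (i : ℤ) (n : ℕ), IsAnomalyOcc (sturmS p q) i n ∧
          IsPeriodicWith (removeBlock (sturmS p q) i n) N} :=
      ⟨0, s.toNat, hocc, by rw [hremove]; exact hyper⟩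
    have hlb : ∀ N ∈ {N : ℕ | ∃ (i : ℤ) (n : ℕ), IsAnomalyOcc (sturmS p q) i n ∧
          IsPeriodicWith (removeBlock (sturmS p q) i n) N}, (p+q).toNat ≤ N := by
      rintro N ⟨i, n, ⟨hn0, _⟩, hNper⟩
      have h := (key i n N hn0 hNper).1
      have : (p+q) ≤ (N:ℤ) := Int.le_of_dvd (by exact_mod_cast hNper.1) h
      omega
    have heq : evLeastPeriod (sturmS p q) = (p+q).toNat := by
      unfold evLeastPeriod
      exact le_antisymm (Nat.sInf_le hmem) (hlb _ (Nat.sInf_mem ⟨_, hmem⟩))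
    rw [heq, hPtoNat]
  · -- anomalySize
    have hmem : s.toNat ∈ {n : ℕ | ∃ i : ℤ, IsAnomalyOcc (sturmS p q) i n} := ⟨0, hocc⟩
    have hlb : ∀ n ∈ {n : ℕ | ∃ i : ℤ, IsAnomalyOcc (sturmS p q) i n}, s.toNat ≤ n := by
      rintro n ⟨i, hn0, N, hNper⟩
      have h := (key i n N hn0 hNper).2
      by_contra hcon
      push_neg at hcon
      have hne : (n:ℤ) - s ≠ 0 := by omega
      have h2 : (p+q) ≤ |(n:ℤ) - s| := Int.le_of_dvd (abs_pos.2 hne) ((dvd_abs _ _).2 h)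
      rw [abs_of_neg (show (n:ℤ) - s < 0 by omega)] at h2
      omega
    have heq : anomalySize (sturmS p q) = s.toNat := by
      unfold anomalySize
      exact le_antisymm (Nat.sInf_le hmem) (hlb _ (Nat.sInf_mem ⟨_, hmem⟩))
    rw [heq, hstoNat]
end

section
/- Let p and q be relatively prime positive integers and let (a,b) be the restricted Bézout coefficients of (q,p). Then the sequence S′(0,q/p) ∈ {0,1}^ℤ is eventually periodic, its least period is p+q, and its anomaly size is a(S′(0,q/p)) = (p+q) − (a+b). -/
open Classical

namespace Stmt13

/-- ceiling of `a / p` for `p > 0`, via euclidean division. -/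
def cl (p a : ℤ) : ℤ := -(-a / p)

variable {p q : ℤ}

lemma cl_le_iff (hp : 0 < p) {a k : ℤ} : cl p a ≤ k ↔ a ≤ k * p := by
  unfold cl
  rw [neg_le, Int.le_ediv_iff_mul_le hp]
  constructor <;> intro h <;> nlinarith

lemma lt_cl_iff (hp : 0 < p) {a k : ℤ} : k < cl p a ↔ k * p < a := by
  rw [← not_le, ← not_le, cl_le_iff hp]

lemma le_fl_iff (hp : 0 < p) {a k : ℤ} : k ≤ a / p ↔ k * p ≤ a :=
  Int.le_ediv_iff_mul_le hp

lemma fl_lt_iff (hp : 0 < p) {a k : ℤ} : a / p < k ↔ a < k * p := by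
  rw [← not_le, ← not_le, le_fl_iff hp]

lemma cl_add_mul (hp : 0 < p) (a c : ℤ) : cl p (a + c * p) = cl p a + c := by
  unfold cl
  have : -(a + c * p) = -a + (-c) * p := by ring
  rw [this, Int.add_mul_ediv_right _ _ hp.ne']
  ring

lemma fl_add_mul (hp : 0 < p) (a c : ℤ) : (a + c * p) / p = a / p + c :=
  Int.add_mul_ediv_right _ _ hp.ne'

lemma fl_mul_le (hp : 0 < p) (a : ℤ) : (a / p) * p ≤ a := by
  rw [← le_fl_iff hp]

lemma lt_fl_succ_mul (hp : 0 < p) (a : ℤ) : a < (a / p + 1) * p := by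
  rw [← fl_lt_iff hp]; omega

lemma cl_succ (hp : 0 < p) (a : ℤ) : cl p (a + 1) = a / p + 1 := by
  apply le_antisymm
  · rw [cl_le_iff hp]
    have := lt_fl_succ_mul hp a
    omega
  · by_contra h
    push_neg at h
    have h2 : cl p (a + 1) ≤ a / p := by omega
    rw [cl_le_iff hp] at h2
    have := fl_mul_le hp a
    omega

lemma cl_zero : cl p 0 = 0 := by unfold cl; simp

lemma cl_mono (hp : 0 < p) {a b : ℤ} (h : a ≤ b) : cl p a ≤ cl p b := by
  rw [cl_le_iff hp]
  have : b ≤ cl p b * p := (cl_le_iff hp).mp le_rfl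
  omega

lemma fl_mono (hp : 0 < p) {a b : ℤ} (h : a ≤ b) : a / p ≤ b / p := by
  rw [le_fl_iff hp]
  have := fl_mul_le hp a
  omega

lemma cl_mul_self (hp : 0 < p) (c : ℤ) : cl p (c * p) = c := by
  have := cl_add_mul hp 0 c
  simpa [cl_zero] using this

lemma fl_pred_of_not_dvd (hp : 0 < p) {a : ℤ} (h : ¬ p ∣ a) : (a - 1) / p = a / p := by
  apply le_antisymm (fl_mono hp (by omega))
  rw [le_fl_iff hp]
  have h1 := fl_mul_le hp a
  rcases lt_or_eq_of_le h1 with h2 | h2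
  · omega
  · exact absurd ⟨a / p, by linarith [h2]⟩ h

lemma cl_eq_of_not_dvd (hp : 0 < p) {a : ℤ} (h : ¬ p ∣ a) : cl p a = a / p + 1 := by
  have : cl p a = cl p ((a - 1) + 1) := by ring_nf
  rw [this, cl_succ hp, fl_pred_of_not_dvd hp h]


/-- left-periodic positions `m + ⌈mq/p⌉` -/
def Cc (p q m : ℤ) : ℤ := m + cl p (m * q)
/-- right-periodic positions `m + ⌊mq/p⌋ + 1` -/
def Gp (p q m : ℤ) : ℤ := m + m * q / p + 1
/-- actual positions of ones of `S'(0,q/p)` -/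
def Gg (p q m : ℤ) : ℤ := if 1 ≤ m then Gp p q m else Cc p q m

section core
variable {p q : ℤ}

lemma Cc_zero : Cc p q 0 = 0 := by simp [Cc, cl_zero]

lemma Cc_strictMono (hp : 0 < p) (hq : 0 < q) : StrictMono (Cc p q) := by
  apply strictMono_int_of_lt_succ
  intro m
  unfold Cc
  have h := cl_mono hp (show m * q ≤ (m + 1) * q by nlinarith)
  omega

lemma Gp_strictMono (hp : 0 < p) (hq : 0 < q) : StrictMono (Gp p q) := by
  apply strictMono_int_of_lt_succ
  intro m
  unfold Gp
  have h := fl_mono hp (show m * q ≤ (m + 1) * q by nlinarith)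
  omega

lemma fl_nonneg (hp : 0 < p) {a : ℤ} (ha : 0 ≤ a) : 0 ≤ a / p := by
  rw [le_fl_iff hp]; omega

lemma Gg_strictMono (hp : 0 < p) (hq : 0 < q) : StrictMono (Gg p q) := by
  apply strictMono_int_of_lt_succ
  intro m
  unfold Gg
  rcases lt_trichotomy m 0 with hm | hm | hm
  · rw [if_neg (by omega), if_neg (by omega)]
    exact Cc_strictMono hp hq (by omega)
  · subst hm
    rw [if_neg (by omega), if_pos (by omega)]
    have : 0 ≤ q / p := fl_nonneg hp hq.le
    simp [Cc_zero, Gp]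
    omega
  · rw [if_pos (by omega), if_pos (by omega)]
    exact Gp_strictMono hp hq (by omega)

lemma Cc_add_mul_p (hp : 0 < p) (m c : ℤ) :
    Cc p q (m + c * p) = Cc p q m + c * (p + q) := by
  unfold Cc
  have : (m + c * p) * q = m * q + (c * q) * p := by ring
  rw [this, cl_add_mul hp]
  ring

lemma Gp_add_mul_p (hp : 0 < p) (m c : ℤ) :
    Gp p q (m + c * p) = Gp p q m + c * (p + q) := by
  unfold Gp
  have : (m + c * p) * q = m * q + (c * q) * p := by ring
  rw [this, fl_add_mul hp]
  ring

lemma Cc_p (hp : 0 < p) : Cc p q p = p + q := by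
  unfold Cc
  rw [show p * q = q * p by ring, cl_mul_self hp]

/-- the key Bezout identity: `Gp m = Cc (m+b) - (a+b)`. -/
lemma Gp_eq_Cc (hp : 0 < p) {a b : ℤ} (hab : b * q - a * p = 1) (m : ℤ) :
    Gp p q m = Cc p q (m + b) - (a + b) := by
  unfold Gp Cc
  have hbq : (m + b) * q = (m * q + 1) + a * p := by nlinarith
  rw [hbq, cl_add_mul hp, cl_succ hp]
  ring

/-- For `p ∤ m`, `Gp` and `Cc` agree. -/
lemma Gp_eq_Cc_of_not_dvd (hp : 0 < p) (hpq : IsCoprime p q) {m : ℤ} (hm : ¬ p ∣ m) :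
    Gp p q m = Cc p q m := by
  unfold Gp Cc
  have hnd : ¬ p ∣ m * q := fun h => hm (hpq.dvd_of_dvd_mul_right h)
  rw [cl_eq_of_not_dvd hp hnd]; ring

end core

def Fb (p q n : ℤ) : ℤ := if 1 ≤ n then n * q / p + 1 else cl p (n * q)

lemma Gg_eq_Fb (p q n : ℤ) : Gg p q n = n + Fb p q n := by
  unfold Gg Gp Cc Fb; split <;> ring

section bridge

lemma rat_le_mul {p q : ℤ} (hq : 0 < q) (n k : ℤ) :
    ((n : ℚ) ≤ (k : ℚ) * ((p : ℚ) / (q : ℚ))) ↔ n * q ≤ k * p := by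
  have hq' : (0 : ℚ) < (q : ℚ) := by exact_mod_cast hq
  rw [mul_div_assoc', le_div_iff₀ hq']
  exact_mod_cast Iff.rfl

lemma rat_lt_mul {p q : ℤ} (hq : 0 < q) (n k : ℤ) :
    ((n : ℚ) < (k : ℚ) * ((p : ℚ) / (q : ℚ))) ↔ n * q < k * p := by
  have hq' : (0 : ℚ) < (q : ℚ) := by exact_mod_cast hq
  rw [mul_div_assoc', lt_div_iff₀ hq']
  exact_mod_cast Iff.rfl

lemma rat_mul_le {p q : ℤ} (hq : 0 < q) (n k : ℤ) :
    ((k : ℚ) * ((p : ℚ) / (q : ℚ)) ≤ (n : ℚ)) ↔ k * p ≤ n * q := by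
  have hq' : (0 : ℚ) < (q : ℚ) := by exact_mod_cast hq
  rw [mul_div_assoc', div_le_iff₀ hq']
  exact_mod_cast Iff.rfl

lemma len_cast {p q : ℤ} (hp : 0 < p) (hq : 0 < q) (j : ℤ) :
    (cellLenS' p q j : ℤ) = Fb p q (j + 1) - Fb p q j := by
  unfold cellLenS'
  rcases lt_trichotomy j 0 with hj | hj | hj
  · rw [if_pos hj]
    have hset : {k : ℤ | (j : ℚ) ≤ (k : ℚ) * ((p : ℚ) / (q : ℚ)) ∧
        (k : ℚ) * ((p : ℚ) / (q : ℚ)) < (j : ℚ) + 1} =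
        ↑(Finset.Ico (cl p (j * q)) (cl p ((j + 1) * q))) := by
      ext k
      rw [Finset.coe_Ico, Set.mem_Ico]
      simp only [Set.mem_setOf_eq]
      rw [rat_le_mul hq j k, cl_le_iff hp, lt_cl_iff hp]
      constructor
      · rintro ⟨h1, h2⟩
        refine ⟨h1, ?_⟩
        have h3 : ((k : ℚ) * ((p : ℚ) / (q : ℚ)) < ((j + 1 : ℤ) : ℚ)) := by push_cast; linarith
        rw [show ((k : ℚ) * ((p : ℚ) / (q : ℚ)) < ((j + 1 : ℤ) : ℚ)) ↔ ¬ (((j + 1 : ℤ) : ℚ) ≤ (k : ℚ) * ((p : ℚ) / (q : ℚ))) by rw [not_le], rat_le_mul hq (j + 1) k] at h3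
        omega
      · rintro ⟨h1, h2⟩
        refine ⟨h1, ?_⟩
        have h3 : ¬ ((j + 1) * q ≤ k * p) := by omega
        rw [← rat_le_mul hq (j + 1) k, not_le] at h3
        push_cast at h3
        linarith
    rw [hset, Set.ncard_coe_finset, Int.card_Ico,
      Int.toNat_of_nonneg (by have := cl_mono hp (show j * q ≤ (j + 1) * q by nlinarith); omega)]
    rw [Fb, Fb, if_neg (by omega), if_neg (by omega)]
  · subst hj
    rw [if_neg (by omega), if_pos rfl]
    have hset : {k : ℤ | 0 ≤ (k : ℚ) * ((p : ℚ) / (q : ℚ)) ∧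
        (k : ℚ) * ((p : ℚ) / (q : ℚ)) ≤ 1} =
        ↑(Finset.Ico (0 : ℤ) (q / p + 1)) := by
      ext k
      rw [Finset.coe_Ico, Set.mem_Ico]
      simp only [Set.mem_setOf_eq]
      have h1 : (0 : ℚ) ≤ (k : ℚ) * ((p : ℚ) / (q : ℚ)) ↔ (0 : ℤ) * q ≤ k * p := by
        have := rat_le_mul (p := p) hq 0 k
        push_cast at this ⊢
        exact this
      have h2 : (k : ℚ) * ((p : ℚ) / (q : ℚ)) ≤ 1 ↔ k * p ≤ (1 : ℤ) * q := by
        have := rat_mul_le (p := p) hq 1 k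
        push_cast at this ⊢
        exact this
      rw [h1, h2]
      constructor
      · rintro ⟨ha, hb⟩
        have ha' : (0 : ℤ) ≤ k * p := by linarith
        have hk : (0 : ℤ) ≤ k := by
          have := (cl_le_iff hp (a := 0) (k := k)).mpr (by linarith)
          rw [cl_zero] at this
          exact this
        have hk2 : k ≤ q / p := (le_fl_iff hp).mpr (by linarith)
        exact ⟨hk, by omega⟩
      · rintro ⟨ha, hb⟩
        have hk2 : k ≤ q / p := by omega
        rw [le_fl_iff hp] at hk2
        have : (0 : ℤ) ≤ k * p := mul_nonneg ha hp.le
        exact ⟨by linarith, by linarith⟩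
    rw [hset, Set.ncard_coe_finset, Int.card_Ico]
    have h0 : (0 : ℤ) ≤ q / p := by rw [le_fl_iff hp]; omega
    rw [Int.toNat_of_nonneg (by omega)]
    rw [Fb, Fb, if_pos (by omega), if_neg (by omega)]
    simp [cl_zero]
  · rw [if_neg (by omega), if_neg (by omega)]
    have hset : {k : ℤ | (j : ℚ) < (k : ℚ) * ((p : ℚ) / (q : ℚ)) ∧
        (k : ℚ) * ((p : ℚ) / (q : ℚ)) ≤ (j : ℚ) + 1} =
        ↑(Finset.Ico (j * q / p + 1) ((j + 1) * q / p + 1)) := by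
      ext k
      rw [Finset.coe_Ico, Set.mem_Ico]
      simp only [Set.mem_setOf_eq]
      rw [rat_lt_mul hq j k]
      constructor
      · rintro ⟨h1, h2⟩
        have h1' : j * q / p < k := by rw [fl_lt_iff hp]; linarith
        have h2' : ((k : ℚ) * ((p : ℚ) / (q : ℚ)) ≤ ((j + 1 : ℤ) : ℚ)) := by push_cast; linarith
        rw [rat_mul_le hq (j + 1) k] at h2'
        have : k ≤ (j + 1) * q / p := by rw [le_fl_iff hp]; linarith
        omega
      · rintro ⟨h1, h2⟩
        have h1' : j * q / p < k := by omega
        rw [fl_lt_iff hp] at h1'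
        have h2' : k ≤ (j + 1) * q / p := by omega
        rw [le_fl_iff hp] at h2'
        refine ⟨by linarith, ?_⟩
        have := (rat_mul_le hq (j + 1) k).mpr h2'
        push_cast at this
        linarith
    rw [hset, Set.ncard_coe_finset, Int.card_Ico]
    have hm := fl_mono (p := p) hp (show j * q ≤ (j + 1) * q by nlinarith)
    rw [Int.toNat_of_nonneg (by omega)]
    rw [Fb, Fb, if_pos (by omega), if_pos (by omega)]

lemma tele (f : ℤ → ℤ) {a b : ℤ} (h : a ≤ b) :
    ∑ j ∈ Finset.Ico a b, (f (j + 1) - f j) = f b - f a := by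
  refine Int.le_induction (motive := fun b _ => ∑ j ∈ Finset.Ico a b, (f (j + 1) - f j) = f b - f a) ?_ ?_ b h
  · simp
  · intro n hn ih
    have hins : Finset.Ico a (n + 1) = insert n (Finset.Ico a n) := by
      ext x; simp [Finset.mem_Ico]; omega
    rw [hins, Finset.sum_insert (by simp [Finset.mem_Ico]), ih]
    ring

lemma cellStart_eq {p q : ℤ} (hp : 0 < p) (hq : 0 < q) (n : ℤ) :
    cellStart (cellLenS' p q) n = Gg p q n := by
  have hFb0 : Fb p q 0 = 0 := by rw [Fb, if_neg (by omega)]; simp [cl_zero]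
  unfold cellStart
  rw [Gg_eq_Fb]
  split
  · next h0 =>
      have hsum : ∑ j ∈ Finset.Ico (0 : ℤ) n, ((cellLenS' p q j : ℤ)) =
          Fb p q n - Fb p q 0 := by
        rw [Finset.sum_congr rfl (fun j _ => len_cast hp hq j)]
        exact tele _ h0
      rw [hsum, hFb0]
      ring
  · next h0 =>
      have hsum : ∑ j ∈ Finset.Ico n (0 : ℤ), ((cellLenS' p q j : ℤ)) =
          Fb p q 0 - Fb p q n := by
        rw [Finset.sum_congr rfl (fun j _ => len_cast hp hq j)]
        exact tele _ (by omega)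
      rw [hsum, hFb0]
      ring

lemma sturm_eq {p q : ℤ} (hp : 0 < p) (hq : 0 < q) :
    sturmS' p q = fun i => if ∃ m, i = Gg p q m then (1 : Fin 2) else 0 := by
  funext i
  unfold sturmS' seqOfCells
  simp only [cellStart_eq hp hq]

end bridge

noncomputable def yL (p q : ℤ) : ℤ → Fin 2 := fun i => if ∃ m, i = Cc p q m then 1 else 0
noncomputable def yR (p q : ℤ) : ℤ → Fin 2 := fun i => if ∃ m, i = Gp p q m then 1 else 0

section seqs
variable {p q a b : ℤ}

lemma yL_one_iff (j : ℤ) : yL p q j = 1 ↔ ∃ m, j = Cc p q m := by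
  unfold yL
  split
  · next h => simpa using h
  · next h => simp [h]

lemma yL_shift (hp : 0 < p) (k c : ℤ) : yL p q (k + c * (p + q)) = yL p q k := by
  unfold yL
  refine if_congr ?_ rfl rfl
  constructor
  · rintro ⟨m, hm⟩
    refine ⟨m - c * p, ?_⟩
    have := Cc_add_mul_p (q := q) hp m (-c)
    have h2 : Cc p q (m - c * p) = Cc p q m - c * (p + q) := by
      rw [show m - c * p = m + (-c) * p by ring, this]; ring
    omega
  · rintro ⟨m, hm⟩
    refine ⟨m + c * p, ?_⟩
    rw [Cc_add_mul_p hp]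
    omega

lemma Gg_p (hp : 0 < p) (hq : 0 < q) : Gg p q p = p + q + 1 := by
  rw [Gg, if_pos (show (1:ℤ) ≤ p by omega), Gp]
  have : p * q = 0 + q * p := by ring
  rw [this, fl_add_mul hp]
  simp

lemma Gg_of_nonpos {m : ℤ} (hm : m ≤ 0) : Gg p q m = Cc p q m := by
  rw [Gg, if_neg (by omega)]

lemma Gg_mid (hp : 0 < p) (hpq : IsCoprime p q) {m : ℤ} (h1 : 1 ≤ m) (h2 : m ≤ p - 1) :
    Gg p q m = Cc p q m := by
  rw [Gg, if_pos h1]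
  exact Gp_eq_Cc_of_not_dvd hp hpq (fun hd => by have := Int.le_of_dvd (by omega) hd; omega)

lemma xL_agree (hp : 0 < p) (hq : 0 < q) (hpq : IsCoprime p q) {k : ℤ}
    (hk : k ≤ p + q - 1) : sturmS' p q k = yL p q k := by
  rw [sturm_eq hp hq]
  unfold yL
  refine if_congr ?_ rfl rfl
  constructor
  · rintro ⟨m, hm⟩
    by_cases h1 : p ≤ m
    · exfalso
      have := (Gg_strictMono hp hq).monotone h1
      rw [Gg_p hp hq] at this
      omega
    · by_cases h2 : 1 ≤ m
      · exact ⟨m, by rw [hm, Gg_mid hp hpq h2 (by omega)]⟩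
      · exact ⟨m, by rw [hm, Gg_of_nonpos (by omega)]⟩
  · rintro ⟨m, hm⟩
    by_cases h1 : p ≤ m
    · exfalso
      have := (Cc_strictMono hp hq).monotone h1
      rw [Cc_p hp] at this
      omega
    · by_cases h2 : 1 ≤ m
      · exact ⟨m, by rw [hm, Gg_mid hp hpq h2 (by omega)]⟩
      · exact ⟨m, by rw [hm, Gg_of_nonpos (by omega)]⟩

lemma Gg_zero : Gg p q 0 = 0 := by
  rw [Gg_of_nonpos le_rfl, Cc_zero]

lemma Gp_zero (hp : 0 < p) : Gp p q 0 = 1 := by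
  rw [Gp]
  simp

lemma x_eq_yR (hp : 0 < p) (hq : 0 < q) {k : ℤ} (hk : 2 ≤ k) :
    sturmS' p q k = yR p q k := by
  rw [sturm_eq hp hq]
  unfold yR
  refine if_congr ?_ rfl rfl
  constructor
  · rintro ⟨m, hm⟩
    by_cases h1 : 1 ≤ m
    · exact ⟨m, by rw [hm, Gg, if_pos h1]⟩
    · exfalso
      have := (Gg_strictMono hp hq).monotone (show m ≤ 0 by omega)
      rw [Gg_zero] at this
      omega
  · rintro ⟨m, hm⟩
    by_cases h1 : 1 ≤ m
    · exact ⟨m, by rw [hm, Gg, if_pos h1]⟩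
    · exfalso
      have := (Gp_strictMono hp hq).monotone (show m ≤ 0 by omega)
      rw [Gp_zero hp] at this
      omega

lemma yR_eq_yL (hp : 0 < p) (hab : b * q - a * p = 1) (j : ℤ) :
    yR p q j = yL p q (j + (a + b)) := by
  unfold yR yL
  refine if_congr ?_ rfl rfl
  constructor
  · rintro ⟨m, hm⟩
    refine ⟨m + b, ?_⟩
    have := Gp_eq_Cc hp hab m
    omega
  · rintro ⟨m, hm⟩
    refine ⟨m - b, ?_⟩
    have := Gp_eq_Cc hp hab (m - b)
    rw [show m - b + b = m by ring] at this
    omega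

lemma x_pq_zero (hp : 0 < p) (hq : 0 < q) : sturmS' p q (p + q) = 0 := by
  rw [sturm_eq hp hq]
  refine if_neg ?_
  rintro ⟨m, hm⟩
  by_cases h1 : p ≤ m
  · have := (Gg_strictMono hp hq).monotone h1
    rw [Gg_p hp hq] at this
    omega
  · have hle := (Gg_strictMono hp hq).monotone (show m ≤ p - 1 by omega)
    have hval : Gg p q (p - 1) ≤ p + q - 1 := by
      by_cases hp1 : p = 1
      · subst hp1
        rw [show (1 : ℤ) - 1 = 0 from rfl, Gg_zero]
        omega
      · rw [Gg, if_pos (by omega), Gp]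
        have heq : (p - 1) * q = -q + q * p := by ring
        rw [heq, fl_add_mul hp]
        have : -q / p < 0 := by rw [fl_lt_iff hp]; omega
        omega
    omega

lemma yL_pq_one (hp : 0 < p) : yL p q (p + q) = 1 := by
  exact if_pos ⟨p, (Cc_p hp).symm⟩

lemma x_one_zero (hp : 0 < p) (hq : 0 < q) : sturmS' p q 1 = 0 := by
  rw [sturm_eq hp hq]
  refine if_neg ?_
  rintro ⟨m, hm⟩
  by_cases h1 : 1 ≤ m
  · have := (Gg_strictMono hp hq).monotone h1
    rw [Gg, if_pos le_rfl, Gp] at this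
    have h2 : 0 ≤ 1 * q / p := by rw [le_fl_iff hp]; omega
    omega
  · have := (Gg_strictMono hp hq).monotone (show m ≤ 0 by omega)
    rw [Gg_zero] at this
    omega

lemma yL_one_ab (hp : 0 < p) (hab : b * q - a * p = 1) : yL p q (1 + (a + b)) = 1 := by
  refine if_pos ⟨b, ?_⟩
  have := Gp_eq_Cc hp hab 0
  rw [Gp_zero hp, zero_add] at this
  omega

end seqs

section period
variable {p q : ℤ}

lemma period_dvd (hp : 0 < p) (hq : 0 < q) (hpq : IsCoprime p q) {r : ℤ} (hr : 0 < r)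
    (hper : ∀ k, yL p q (k + r) = yL p q k) : (p + q) ∣ r := by
  have hCinj : Function.Injective (Cc p q) := (Cc_strictMono hp hq).injective
  have mem : ∀ m : ℤ, ∃ m', Cc p q m' = Cc p q m + r := by
    intro m
    have h1 : yL p q (Cc p q m) = 1 := (yL_one_iff _).mpr ⟨m, rfl⟩
    have h2 : yL p q (Cc p q m + r) = 1 := by rw [hper (Cc p q m)]; exact h1
    obtain ⟨m', hm'⟩ := (yL_one_iff _).mp h2
    exact ⟨m', hm'.symm⟩
  classical
  set d : ℤ → ℤ := fun m => Classical.choose (mem m) - m with hd_def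
  have hd : ∀ m, Cc p q (m + d m) = Cc p q m + r := by
    intro m
    have hc := Classical.choose_spec (mem m)
    have he : m + d m = Classical.choose (mem m) := by simp [hd_def]
    rw [he]
    exact hc
  have hmono : ∀ m, d m ≤ d (m + 1) := by
    intro m
    have h1 : Cc p q (m + d m) < Cc p q (m + 1 + d (m + 1)) := by
      rw [hd, hd]
      have := Cc_strictMono hp hq (show m < m + 1 by omega)
      omega
    have := (Cc_strictMono hp hq).lt_iff_lt.mp h1
    omega
  have hchain : ∀ (m : ℤ) (j : ℕ), d m ≤ d (m + j) := by
    intro m j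
    induction j with
    | zero => simp
    | succ j ih =>
        have := hmono (m + j)
        have hcast : m + ((j : ℕ) + 1 : ℕ) = (m + j) + 1 := by push_cast; ring
        rw [hcast]
        omega
  have hperiod : ∀ m, d (m + p) = d m := by
    intro m
    have h1 : Cc p q (m + p + d (m + p)) = Cc p q (m + d m + p) := by
      have e1 : Cc p q (m + p + d (m + p)) = Cc p q (m + p) + r := hd (m + p)
      have e2 : Cc p q (m + p) = Cc p q m + (p + q) := by
        have := Cc_add_mul_p (q := q) hp m 1
        rw [show m + 1 * p = m + p by ring] at this
        rw [this]; ring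
      have e3 : Cc p q (m + d m + p) = Cc p q (m + d m) + (p + q) := by
        have := Cc_add_mul_p (q := q) hp (m + d m) 1
        rw [show m + d m + 1 * p = m + d m + p by ring] at this
        rw [this]; ring
      rw [e1, e2, e3, hd]
      ring
    have := hCinj h1
    omega
  have hstep : ∀ m, d (m + 1) = d m := by
    intro m
    have h1 : d (m + 1) ≤ d (m + p) := by
      have := hchain (m + 1) (p - 1).toNat
      rw [show (m + 1) + ((p - 1).toNat : ℤ) = m + p by
        rw [Int.toNat_of_nonneg (by omega)]; ring] at this
      exact this
    rw [hperiod m] at h1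
    have := hmono m
    omega
  have hconst : ∀ m, d m = d 0 := by
    intro m
    induction m using Int.induction_on with
    | zero => rfl
    | succ n ih => rw [hstep n, ih]
    | pred n ih => rw [← ih, ← hstep (-(n : ℤ) - 1)]; norm_num
  set δ := d 0 with hδ_def
  have hδ : ∀ m, Cc p q (m + δ) = Cc p q m + r := by
    intro m
    have := hd m
    rw [hconst m] at this
    exact this
  have hiter : ∀ c : ℕ, Cc p q (c * δ) = c * r := by
    intro c
    induction c with
    | zero => simp [Cc_zero]
    | succ c ih =>
        have h1 : ((c + 1 : ℕ) : ℤ) * δ = (c : ℤ) * δ + δ := by push_cast; ring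
        rw [h1, hδ, ih]
        push_cast; ring
  have hp' : Cc p q (p * δ) = p * r := by
    have := hiter p.toNat
    rwa [Int.toNat_of_nonneg hp.le] at this
  have hCval : Cc p q (p * δ) = δ * (p + q) := by
    unfold Cc
    rw [show p * δ * q = (δ * q) * p by ring, cl_mul_self hp]
    ring
  have hkey : p * r = (p + q) * δ := by rw [← hp', hCval]; ring
  have hcop : IsCoprime (p + q) p := by
    have := hpq.symm.add_mul_left_left 1
    rwa [show q + p * 1 = p + q by ring] at this
  exact hcop.dvd_of_dvd_mul_left ⟨δ, hkey⟩

lemma ray_eq (hp : 0 < p) (hq : 0 < q) {z : ℤ → Fin 2} {N : ℕ} (hN : 0 < N)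
    (hper : ∀ i : ℤ, z (i + N) = z i) {M : ℤ} (hagree : ∀ k ≤ M, z k = yL p q k) :
    z = yL p q := by
  have hiter : ∀ (c : ℕ) (j : ℤ), z (j + (c * N : ℕ)) = z j := by
    intro c
    induction c with
    | zero => simp
    | succ c ih =>
        intro j
        have h2 : (j + ((c + 1) * N : ℕ) : ℤ) = (j + (c * N : ℕ)) + N := by push_cast; ring
        rw [h2, hper, ih]
  funext k
  have hpqpos : (0 : ℤ) < p + q := by omega
  set t : ℕ := (k - M).toNat with ht
  set S : ℕ := t * (p + q).toNat * N with hS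
  have hiterS := hiter (t * (p + q).toNat) (k - (S : ℤ))
  rw [show (t * (p + q).toNat) * N = S from rfl] at hiterS
  rw [show k - (S : ℤ) + (S : ℤ) = k by ring] at hiterS
  have htn : (1 : ℕ) ≤ (p + q).toNat := by omega
  have hSt : t ≤ S := by
    calc t = t * 1 * 1 := by ring
    _ ≤ t * (p + q).toNat * N := by
        apply Nat.mul_le_mul
        · exact Nat.mul_le_mul_left t htn
        · omega
  have hle : k - (S : ℤ) ≤ M := by
    have h2 : k - M ≤ (t : ℤ) := Int.self_le_toNat _
    have h3 : (t : ℤ) ≤ (S : ℤ) := by exact_mod_cast hSt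
    omega
  rw [hiterS, hagree _ hle]
  have harg : (k - (S : ℤ)) + ((t : ℤ) * N) * (p + q) = k := by
    have hcast : ((S : ℕ) : ℤ) = (t : ℤ) * (p + q) * N := by
      rw [hS]; push_cast [Int.toNat_of_nonneg hpqpos.le]; ring
    rw [hcast]; ring
  calc yL p q (k - (S : ℤ)) = yL p q ((k - (S : ℤ)) + ((t : ℤ) * N) * (p + q)) :=
        (yL_shift hp _ _).symm
  _ = yL p q k := by rw [harg]

end period

section occ
variable {p q a b : ℤ}

lemma res_eq (hp : 0 < p) (hq : 0 < q) (hpq : IsCoprime p q) {i : ℤ} {n : ℕ}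
    (hocc : IsAnomalyOcc (sturmS' p q) i n) :
    removeBlock (sturmS' p q) i n = yL p q := by
  obtain ⟨hn, N, hN, hper⟩ := hocc
  refine ray_eq hp hq hN hper (M := min i (p + q - 1)) ?_
  intro k hk
  simp only [removeBlock]
  rw [if_pos (show k ≤ i by omega)]
  exact xL_agree hp hq hpq (show k ≤ p + q - 1 by omega)

lemma occ_cond (hp : 0 < p) (hq : 0 < q) (hpq : IsCoprime p q)
    (ha : 0 ≤ a) (hb : 0 < b) (hab : b * q - a * p = 1) {i : ℤ} {n : ℕ} (hn : 0 < n)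
    (hres : removeBlock (sturmS' p q) i n = yL p q) :
    i ≤ p + q - 1 ∧ 1 ≤ i + n ∧ (p + q) ∣ ((n : ℤ) + a + b) := by
  have hx : ∀ k : ℤ, (if k ≤ i then sturmS' p q k else sturmS' p q (k + n)) = yL p q k := by
    intro k
    have := congrFun hres k
    simpa [removeBlock] using this
  have part1 : i ≤ p + q - 1 := by
    by_contra h
    push_neg at h
    have h2 := hx (p + q)
    rw [if_pos (by omega)] at h2
    rw [x_pq_zero hp hq, yL_pq_one hp] at h2
    exact absurd h2 (by decide)
  have hdvd : (p + q) ∣ ((n : ℤ) + a + b) := by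
    apply period_dvd hp hq hpq (show (0 : ℤ) < (n : ℤ) + a + b by
      have : (1 : ℤ) ≤ (n : ℤ) := by exact_mod_cast hn
      omega)
    have hbig : ∀ k : ℤ, max i 1 + 1 ≤ k → yL p q (k + ((n : ℤ) + a + b)) = yL p q k := by
      intro k hk
      have h2 := hx k
      rw [if_neg (show ¬ k ≤ i by omega)] at h2
      have h3 : sturmS' p q (k + n) = yR p q (k + n) := x_eq_yR hp hq (by omega)
      have h4 : yR p q (k + n) = yL p q ((k + n) + (a + b)) := yR_eq_yL hp hab _
      rw [h3, h4] at h2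
      rw [show k + ((n : ℤ) + a + b) = (k + n) + (a + b) by push_cast; ring]
      exact h2
    intro k
    set c : ℕ := (max i 1 + 1 - k).toNat with hc
    have hc1 : max i 1 + 1 - k ≤ (c : ℤ) := Int.self_le_toNat _
    have hc2 : (c : ℤ) * 1 ≤ (c : ℤ) * (p + q) :=
      mul_le_mul_of_nonneg_left (by omega) (by positivity)
    have hck : max i 1 + 1 ≤ k + (c : ℤ) * (p + q) := by omega
    calc yL p q (k + ((n : ℤ) + a + b))
        = yL p q (k + ((n : ℤ) + a + b) + (c : ℤ) * (p + q)) := (yL_shift hp _ _).symm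
      _ = yL p q ((k + (c : ℤ) * (p + q)) + ((n : ℤ) + a + b)) := by ring_nf
      _ = yL p q (k + (c : ℤ) * (p + q)) := hbig _ hck
      _ = yL p q k := yL_shift hp k c
  refine ⟨part1, ?_, hdvd⟩
  by_contra h
  push_neg at h
  have h2 := hx (1 - n)
  rw [if_neg (show ¬ (1 - (n : ℤ) ≤ i) by omega)] at h2
  rw [show (1 : ℤ) - n + n = 1 by ring, x_one_zero hp hq] at h2
  obtain ⟨c0, hc0⟩ := hdvd
  have h3 : yL p q (1 - (n : ℤ)) = yL p q ((1 - (n : ℤ)) + c0 * (p + q)) :=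
    (yL_shift hp _ _).symm
  rw [show (1 - (n : ℤ)) + c0 * (p + q) = 1 + (a + b) by linarith [hc0], yL_one_ab hp hab] at h3
  rw [← h2] at h3
  exact absurd h3 (by decide)

lemma occ_back (hp : 0 < p) (hq : 0 < q) (hpq : IsCoprime p q)
    (hab : b * q - a * p = 1) {i : ℤ} {n : ℕ} (hi : i ≤ p + q - 1) (hin : 1 ≤ i + n)
    (hd : (p + q) ∣ ((n : ℤ) + a + b)) :
    removeBlock (sturmS' p q) i n = yL p q := by
  funext k
  simp only [removeBlock]
  by_cases hk : k ≤ i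
  · rw [if_pos hk]
    exact xL_agree hp hq hpq (by omega)
  · rw [if_neg hk]
    push_neg at hk
    rw [x_eq_yR hp hq (by omega), yR_eq_yL hp hab]
    obtain ⟨c0, hc0⟩ := hd
    rw [show (k + (n : ℤ)) + (a + b) = k + c0 * (p + q) by linarith [hc0], yL_shift hp]

end occ

end Stmt13


/-- `S′(0,q/p)` is eventually periodic with least period `p+q` and anomaly
size `(p+q) - (a+b)`, where `(a,b)` are the restricted Bézout coefficients of `(q,p)`. -/
theorem stmt_13 (p q : ℤ) (hp : 0 < p) (hq : 0 < q) (hpq : IsCoprime p q)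
    (a b : ℤ) (ha : 0 ≤ a) (ha' : a < q) (hb : 0 < b) (hb' : b ≤ p)
    (hab : b * q - a * p = 1) :
    EventuallyPeriodic (sturmS' p q) ∧ (evLeastPeriod (sturmS' p q) : ℤ) = p + q ∧
      (anomalySize (sturmS' p q) : ℤ) = (p + q) - (a + b) := by
  have hx_nonper : ¬ IsPeriodicSeq (sturmS' p q) := by
    rintro ⟨N, hN, hper⟩
    have hxy : sturmS' p q = Stmt13.yL p q :=
      Stmt13.ray_eq hp hq hN hper (M := p + q - 1)
        (fun k hk => Stmt13.xL_agree hp hq hpq hk)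
    have h0 := Stmt13.x_pq_zero hp hq
    rw [hxy, Stmt13.yL_pq_one hp] at h0
    exact absurd h0 (by decide)
  set n₀ : ℕ := ((p + q) - (a + b)).toNat with hn₀
  have habpq : a + b ≤ p + q - 1 := by omega
  have hn₀cast : (n₀ : ℤ) = (p + q) - (a + b) := Int.toNat_of_nonneg (by omega)
  have hn₀pos : 0 < n₀ := by omega
  have hpqpos : (0 : ℤ) < p + q := by omega
  have hpqtn : ((p + q).toNat : ℤ) = p + q := Int.toNat_of_nonneg (by omega)
  have hyL_per : IsPeriodicWith (Stmt13.yL p q) (p + q).toNat := by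
    refine ⟨by omega, fun i => ?_⟩
    rw [show i + ((p + q).toNat : ℤ) = i + 1 * (p + q) by rw [hpqtn]; ring]
    exact Stmt13.yL_shift hp i 1
  have hres₀ : removeBlock (sturmS' p q) 0 n₀ = Stmt13.yL p q := by
    refine Stmt13.occ_back hp hq hpq hab (by omega) (by omega) ⟨1, by omega⟩
  have hocc₀ : IsAnomalyOcc (sturmS' p q) 0 n₀ :=
    ⟨hn₀pos, ⟨(p + q).toNat, by rw [hres₀]; exact hyL_per⟩⟩
  refine ⟨⟨hx_nonper, 0, n₀, hocc₀⟩, ?_, ?_⟩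
  · unfold evLeastPeriod
    set T := {N : ℕ | ∃ (i : ℤ) (n : ℕ), IsAnomalyOcc (sturmS' p q) i n ∧
      IsPeriodicWith (removeBlock (sturmS' p q) i n) N} with hT
    have hmemT : (p + q).toNat ∈ T := ⟨0, n₀, hocc₀, by rw [hres₀]; exact hyL_per⟩
    have hsmem := Nat.sInf_mem ⟨_, hmemT⟩
    obtain ⟨i, n, hocc, hperN⟩ := hsmem
    rw [Stmt13.res_eq hp hq hpq hocc] at hperN
    obtain ⟨hNpos, hNper⟩ := hperN
    have hdvd : (p + q) ∣ ((sInf T : ℕ) : ℤ) :=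
      Stmt13.period_dvd hp hq hpq (by exact_mod_cast hNpos) (fun k => hNper k)
    have hle := Nat.sInf_le hmemT
    have h1 : ((sInf T : ℕ) : ℤ) ≤ p + q := by
      have : ((sInf T : ℕ) : ℤ) ≤ ((p + q).toNat : ℤ) := by exact_mod_cast hle
      omega
    have h2 : p + q ≤ ((sInf T : ℕ) : ℤ) := Int.le_of_dvd (by exact_mod_cast hNpos) hdvd
    omega
  · unfold anomalySize
    set S := {n : ℕ | ∃ i : ℤ, IsAnomalyOcc (sturmS' p q) i n} with hS
    have hmemS : n₀ ∈ S := ⟨0, hocc₀⟩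
    have hsmem := Nat.sInf_mem ⟨_, hmemS⟩
    obtain ⟨i, hocc⟩ := hsmem
    have hres := Stmt13.res_eq hp hq hpq hocc
    obtain ⟨_, _, hdvd⟩ := Stmt13.occ_cond hp hq hpq ha hb hab hocc.1 hres
    have hle := Nat.sInf_le hmemS
    have h1 : (0 : ℤ) < ((sInf S : ℕ) : ℤ) + a + b := by
      have : 0 < sInf S := hocc.1
      omega
    have h2 : ((sInf S : ℕ) : ℤ) + a + b ≤ p + q := by
      have : ((sInf S : ℕ) : ℤ) ≤ (n₀ : ℤ) := by exact_mod_cast hle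
      omega
    have h3 := Int.le_of_dvd h1 hdvd
    omega
end
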